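/- arXiv:1303.5021 — 2 statements merged into one kernel-verified Lean document; each statement's English description precedes it below -/
import Mathlib

section
/- If w' ∈ W_n is obtained from w ∈ W_n by a single admissible transformation (w' = L_j(w) for a left admissible L_j, or w' = R_j(w) for a right admissible R_j), then π_i(w') = −π_i(w) for every 0 ≤ i ≤ r−1. -/
open scoped BigOperators

/-!
Common definitions: the complex reflection group `G(r,1,n)` recorded in one-line
notation, its one-dimensional representations, the generalized Robinson–Schensted
map to pairs of `r`-multitableaux, and the associated tableau statistics.
-/

/-- An element of `W_n = G(r,1,n)` in one-line notation
`w = [ζ^{a 0} σ 0, …, ζ^{a (n-1)} σ (n-1)]`: the nonzero entry of column `i`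
is `ζ ^ (a i)` and lies in row `σ i`. -/
@[ext]
structure GW (r n : ℕ) where
  a : Fin n → ZMod r
  σ : Equiv.Perm (Fin n)

namespace GW

variable {r n : ℕ}

instance : Mul (GW r n) := ⟨fun w v => ⟨fun j => w.a (v.σ j) + v.a j, w.σ * v.σ⟩⟩
instance : One (GW r n) := ⟨⟨fun _ => 0, 1⟩⟩
instance : Inv (GW r n) := ⟨fun w => ⟨fun j => -(w.a (w.σ⁻¹ j)), w.σ⁻¹⟩⟩

@[simp] lemma mul_a (w v : GW r n) (j : Fin n) : (w * v).a j = w.a (v.σ j) + v.a j := rfl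
@[simp] lemma mul_sigma (w v : GW r n) : (w * v).σ = w.σ * v.σ := rfl
@[simp] lemma one_a (j : Fin n) : (1 : GW r n).a j = 0 := rfl
@[simp] lemma one_sigma : (1 : GW r n).σ = 1 := rfl
@[simp] lemma inv_a (w : GW r n) (j : Fin n) : (w⁻¹).a j = -(w.a (w.σ⁻¹ j)) := rfl
@[simp] lemma inv_sigma (w : GW r n) : (w⁻¹).σ = w.σ⁻¹ := rfl

instance : Group (GW r n) where
  mul_assoc w v u := by
    ext j
    · simp [Equiv.Perm.mul_apply, add_assoc]
    · simp [mul_assoc]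
  one_mul w := by ext j <;> simp
  mul_one w := by ext j <;> simp
  inv_mul_cancel w := by
    ext j
    · simp
    · simp

end GW

/-- `ζ = exp(2π√-1 / r)`, a primitive `r`-th root of unity. -/
noncomputable def zeta (r : ℕ) : ℂ := Complex.exp (2 * Real.pi * Complex.I / r)

/-- The one-dimensional representation `sgn_i` of `W_n = G(r,1,n)`:
`sgn_i w = ζ^{i (a_1 + ⋯ + a_n)} ⬝ sgn σ`. -/
noncomputable def sgnRep (r n : ℕ) (i : ℕ) (w : GW r n) : ℂ :=
  zeta r ^ (i * ∑ j, (w.a j).val) * ((Equiv.Perm.sign w.σ : ℤ) : ℂ)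

/-- A tableau, recorded as its list of rows of labels. -/
abbrev Tab := List (List ℕ)

/-- Robinson–Schensted row insertion of the value `x` into a tableau. -/
def rowInsert : ℕ → Tab → Tab
  | x, [] => [[x]]
  | x, row :: rest =>
    if h : row.findIdx (fun y => decide (x < y)) < row.length then
      row.set (row.findIdx (fun y => decide (x < y))) x ::
        rowInsert (row.get ⟨row.findIdx (fun y => decide (x < y)), h⟩) rest
    else (row ++ [x]) :: rest

/-- The shape of a tableau: its list of row lengths. -/
def shape (T : Tab) : List ℕ := T.map List.length

/-- Append the label `lab` at the end of row `i` of the (recording) tableau `Q`. -/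
def place (Q : Tab) (i lab : ℕ) : Tab :=
  if i < Q.length then Q.set i ((Q.getD i []) ++ [lab]) else Q ++ [[lab]]

/-- One step of the Robinson–Schensted algorithm: insert the value `x` into the
insertion tableau and record the label `lab` in the new box of the recording
tableau. -/
def RSstep : Tab × Tab → ℕ × ℕ → Tab × Tab := fun PQ xl =>
  let P' := rowInsert xl.1 PQ.1
  let i := (List.range P'.length).findIdx
    (fun i => decide ((PQ.1.getD i []).length < (P'.getD i []).length))
  (P', place PQ.2 i xl.2)

/-- The classical Robinson–Schensted correspondence applied to a word of
(value, label) pairs, producing the insertion and recording tableaux. -/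
def RSword (word : List (ℕ × ℕ)) : Tab × Tab := word.foldl RSstep ([], [])

/-- The positions `i` (in increasing order) whose attached exponent `a i` equals `k`. -/
def labelIdx {r n : ℕ} (w : GW r n) (k : ℕ) : List (Fin n) :=
  (List.finRange n).filter (fun i => decide ((w.a i).val = k))

/-- The word `w^(k)` together with its recording labels: the values `σ i` (1-based)
attached to the positions `i` (1-based) with `a i = k`, in increasing order of `i`. -/
def wordPairs {r n : ℕ} (w : GW r n) (k : ℕ) : List (ℕ × ℕ) :=
  (labelIdx w k).map (fun i => ((w.σ i : ℕ) + 1, (i : ℕ) + 1))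

/-- The insertion multitableau `P(w)` of the generalized Robinson–Schensted map. -/
def Ptab {r n : ℕ} (w : GW r n) : Fin r → Tab := fun k => (RSword (wordPairs w k)).1

/-- The recording multitableau `Q(w)` of the generalized Robinson–Schensted map. -/
def Qtab {r n : ℕ} (w : GW r n) : Fin r → Tab := fun k => (RSword (wordPairs w k)).2

/-- The set of labels of a tableau. -/
def labels (T : Tab) : Finset ℕ := T.flatten.toFinset

/-- The (0-based) index of the row of `T` containing the label `x`. -/
def rowOf (T : Tab) (x : ℕ) : ℕ := T.findIdx (fun row => decide (x ∈ row))

/-- The number of inversions of a tableau: pairs `(i, j)` with `i < j` and the box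
labeled `i` in a row strictly below the box labeled `j`. -/
def invTab (T : Tab) : ℕ :=
  ((labels T ×ˢ labels T).filter (fun p => p.1 < p.2 ∧ rowOf T p.2 < rowOf T p.1)).card

/-- `crossInv S T` is the number of pairs `(j, i)` with `j > i`, `j` a label of `S`
and `i` a label of `T`, i.e. the cardinality of `Inv(S, T)`. -/
def crossInv (S T : Tab) : ℕ :=
  ((labels S ×ˢ labels T).filter (fun p => p.2 < p.1)).card

/-- The number of inversions of a multitableau. -/
def invMulti {r : ℕ} (T : Fin r → Tab) : ℕ :=
  (∑ k, invTab (T k)) + ∑ k, ∑ l, if k < l then crossInv (T k) (T l) else 0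

/-- The sign `(-1)^{inv T}` of a multitableau. -/
def signMulti {r : ℕ} (T : Fin r → Tab) : ℂ := (-1) ^ invMulti T

/-- The number of boxes in the even-indexed rows (1-based indexing) of a tableau. -/
def eTab (T : Tab) : ℕ :=
  ∑ i ∈ Finset.range T.length, if i % 2 = 1 then (T.getD i []).length else 0

/-- The total number of boxes in the even-indexed rows of a multitableau. -/
def eMulti {r : ℕ} (T : Fin r → Tab) : ℕ := ∑ k, eTab (T k)

/-- The number of boxes of a tableau. -/
def sizeTab (T : Tab) : ℕ := T.flatten.length

/-- `2 ⬝ spin T = Σ_k k ⬝ |sh(T_k)|`. -/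
def twoSpin {r : ℕ} (T : Fin r → Tab) : ℕ := ∑ k : Fin r, (k : ℕ) * sizeTab (T k)

/-- The spin statistic `spin T = (1/2) Σ_k k ⬝ |sh(T_k)|`. -/
def spin {r : ℕ} (T : Fin r → Tab) : ℚ := (twoSpin T : ℚ) / 2

/-- The function `π_i(w) = (-1)^{e(P)} (ζ^i)^{spin P + spin Q} sign(P) sign(Q)`
where `(P, Q) = RS(w)`. -/
noncomputable def piStat (r n : ℕ) (i : ℕ) (w : GW r n) : ℂ :=
  (-1) ^ eMulti (Ptab w) *
    (zeta r ^ i) ^ (((spin (Ptab w) + spin (Qtab w) : ℚ) : ℂ)) *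
    signMulti (Ptab w) * signMulti (Qtab w)

/-- `T` is a standard Young `r`-multitableau of rank `n`: each component consists of
nonempty rows of weakly decreasing lengths, labels strictly increase along rows and
down columns, and the labels used are exactly `1, …, n`, each exactly once. -/
def IsStandardMulti (r n : ℕ) (T : Fin r → Tab) : Prop :=
  (∀ k : Fin r,
      (∀ row ∈ T k, row ≠ [] ∧ List.Chain' (· < ·) row) ∧
      List.Chain' (fun r1 r2 => r2.length ≤ r1.length ∧
        ∀ j < r2.length, r1.getD j 0 < r2.getD j 0) (T k)) ∧
  (∑ k : Fin r, ((T k).flatten : Multiset ℕ)) = (Finset.Icc 1 n).val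

/-- A multitableau is ascending if every label of `T k` is smaller than every label
of `T (k+1)`. -/
def AscendingMulti {r : ℕ} (T : Fin r → Tab) : Prop :=
  ∀ (k : ℕ) (h : k + 1 < r),
    ∀ x ∈ labels (T ⟨k, by omega⟩), ∀ y ∈ labels (T ⟨k + 1, h⟩), x < y

/-- An element `w ∈ W_n` is ascending if its exponents increase weakly and, for each
`k < r - 1`, every element of the word `w^(k)` is smaller than every element of
`w^(k+1)`. -/
def AscendingElem {r n : ℕ} (w : GW r n) : Prop :=
  (∀ i j : Fin n, i ≤ j → (w.a i).val ≤ (w.a j).val) ∧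
  ∀ k : ℕ, k + 1 < r →
    ∀ x ∈ (wordPairs w k).map Prod.fst, ∀ y ∈ (wordPairs w (k + 1)).map Prod.fst, x < y

/-- The generator `s_0 = [ζ·1, 2, …, n]`. -/
def s0El (r n : ℕ) : GW r n := ⟨fun i => if (i : ℕ) = 0 then 1 else 0, 1⟩

/-- The generator `s_j` (for `1 ≤ j ≤ n - 1`): the permutation matrix of the
transposition interchanging `j` and `j + 1` (1-based values). -/
def sEl (r n : ℕ) (j : ℕ) (h1 : 1 ≤ j) (h2 : j + 1 ≤ n) : GW r n :=
  ⟨fun _ => 0, Equiv.swap ⟨j - 1, by omega⟩ ⟨j, by omega⟩⟩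

/-- The left operator `L_j(w) = s_j ⬝ w`. -/
def Lop {r n : ℕ} (w : GW r n) (j : ℕ) (h1 : 1 ≤ j) (h2 : j + 1 ≤ n) : GW r n :=
  sEl r n j h1 h2 * w

/-- The right operator `R_j(w) = w ⬝ s_j`. -/
def Rop {r n : ℕ} (w : GW r n) (j : ℕ) (h1 : 1 ≤ j) (h2 : j + 1 ≤ n) : GW r n :=
  w * sEl r n j h1 h2

/-- `L_j` is left admissible for `w`: the exponents attached to the entries with
values `j` and `j+1` differ. -/
def LeftAdm {r n : ℕ} (w : GW r n) (j : ℕ) (h1 : 1 ≤ j) (h2 : j + 1 ≤ n) : Prop :=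
  w.a (w.σ⁻¹ ⟨j - 1, by omega⟩) ≠ w.a (w.σ⁻¹ ⟨j, by omega⟩)

/-- `R_j` is right admissible for `w`: the exponents in positions `j` and `j+1`
differ, i.e. `a_j ≠ a_{j+1}`. -/
def RightAdm {r n : ℕ} (w : GW r n) (j : ℕ) (h1 : 1 ≤ j) (h2 : j + 1 ≤ n) : Prop :=
  w.a ⟨j - 1, by omega⟩ ≠ w.a ⟨j, by omega⟩

/-- A single admissible transformation: `w ↦ L_j(w)` for a left admissible `L_j`,
or `w ↦ R_j(w)` for a right admissible `R_j`. -/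
inductive AdmStep (r n : ℕ) : GW r n → GW r n → Prop
  | left (w : GW r n) (j : ℕ) (h1 : 1 ≤ j) (h2 : j + 1 ≤ n)
      (ha : LeftAdm w j h1 h2) : AdmStep r n w (Lop w j h1 h2)
  | right (w : GW r n) (j : ℕ) (h1 : 1 ≤ j) (h2 : j + 1 ≤ n)
      (ha : RightAdm w j h1 h2) : AdmStep r n w (Rop w j h1 h2)


/-! ### Auxiliary developments for the proof -/

namespace AdmAux

open List

/-- The transposition of `j` and `j+1` on `ℕ`. -/
def nswap (j : ℕ) (x : ℕ) : ℕ := if x = j then j + 1 else if x = j + 1 then j else x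

lemma nswap_inj (j : ℕ) : Function.Injective (nswap j) := by
  intro x y h; unfold nswap at h; split_ifs at h <;> omega

lemma nswap_nswap (j x : ℕ) : nswap j (nswap j x) = x := by
  unfold nswap; split_ifs <;> omega

lemma nswap_lt_iff {j x y : ℕ} (h1 : ¬(x = j ∧ y = j + 1)) (h2 : ¬(y = j ∧ x = j + 1)) :
    nswap j x < nswap j y ↔ x < y := by
  unfold nswap; split_ifs <;> omega

lemma nswap_order {j : ℕ} {Sp : ℕ → Prop} (h : ¬(Sp j ∧ Sp (j + 1))) :
    ∀ x y, Sp x → Sp y → (x < y ↔ nswap j x < nswap j y) := by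
  intro x y hx hy
  have h1 : ¬(x = j ∧ y = j + 1) := by rintro ⟨rfl, rfl⟩; exact h ⟨hx, hy⟩
  have h2 : ¬(y = j ∧ x = j + 1) := by rintro ⟨rfl, rfl⟩; exact h ⟨hy, hx⟩
  exact (nswap_lt_iff h1 h2).symm

/-- Apply a relabelling function to every entry of a tableau. -/
def mapTab (f : ℕ → ℕ) (T : Tab) : Tab := T.map (List.map f)

@[simp] lemma mapTab_nil (f : ℕ → ℕ) : mapTab f [] = [] := rfl

@[simp] lemma mapTab_cons (f : ℕ → ℕ) (row : List ℕ) (T : Tab) :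
    mapTab f (row :: T) = row.map f :: mapTab f T := rfl

@[simp] lemma mapTab_length (f : ℕ → ℕ) (T : Tab) : (mapTab f T).length = T.length :=
  List.length_map _

lemma mapTab_getD (f : ℕ → ℕ) (T : Tab) (i : ℕ) :
    (mapTab f T).getD i [] = (T.getD i []).map f := by
  rcases lt_or_ge i T.length with h | h
  · rw [List.getD_eq_getElem _ _ (by simpa using h), List.getD_eq_getElem _ _ h]
    simp [mapTab]
  · rw [List.getD_eq_default _ _ (by simpa using h), List.getD_eq_default _ _ h]; rfl

lemma findIdx_congr {α : Type*} {p q : α → Bool} :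
    ∀ (l : List α), (∀ x ∈ l, p x = q x) → l.findIdx p = l.findIdx q
  | [], _ => rfl
  | a :: l, h => by
    simp only [List.findIdx_cons, h a (by simp)]
    rw [findIdx_congr l (fun x hx => h x (by simp [hx]))]

lemma findIdx_map' {α β : Type*} (f : α → β) (p : β → Bool) :
    ∀ l : List α, (l.map f).findIdx p = l.findIdx (fun x => p (f x))
  | [] => rfl
  | a :: l => by
    simp only [List.map_cons, List.findIdx_cons, findIdx_map' f p l]

lemma rowInsert_map {f : ℕ → ℕ} {Sp : ℕ → Prop}
    (hf : ∀ x y, Sp x → Sp y → (x < y ↔ f x < f y)) :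
    ∀ (T : Tab) (x : ℕ), Sp x → (∀ y ∈ T.flatten, Sp y) →
      rowInsert (f x) (mapTab f T) = mapTab f (rowInsert x T)
  | [], x, _, _ => rfl
  | row :: rest, x, hx, hT => by
    have hrow : ∀ y ∈ row, Sp y := fun y hy => hT y (by simp [hy])
    have hrest : ∀ y ∈ rest.flatten, Sp y := fun y hy => hT y (by simp [hy])
    have hidx : (row.map f).findIdx (fun y => decide (f x < y)) =
        row.findIdx (fun y => decide (x < y)) := by
      rw [findIdx_map']
      exact findIdx_congr _ (fun y hy => by
        simp only [decide_eq_decide]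
        exact (hf x y hx (hrow y hy)).symm)
    simp only [mapTab_cons, rowInsert, hidx, List.length_map]
    by_cases h : row.findIdx (fun y => decide (x < y)) < row.length
    · rw [dif_pos h, dif_pos h]
      have hget : (row.map f).get ⟨row.findIdx (fun y => decide (x < y)), by simpa using h⟩ =
          f (row.get ⟨row.findIdx (fun y => decide (x < y)), h⟩) := by
        simp
      rw [hget, mapTab_cons]
      exact congrArg₂ List.cons (List.map_set).symm
        (rowInsert_map hf rest _ (hrow _ (List.get_mem _ _)) hrest)
    · rw [dif_neg h, dif_neg h]
      simp [mapTab]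

lemma mem_flatten_rowInsert : ∀ (T : Tab) (x y : ℕ),
    (y ∈ (rowInsert x T).flatten ↔ y = x ∨ y ∈ T.flatten)
  | [], x, y => by simp [rowInsert]
  | row :: rest, x, y => by
    simp only [rowInsert]
    by_cases h : row.findIdx (fun z => decide (x < z)) < row.length
    · rw [dif_pos h]
      set i := row.findIdx (fun z => decide (x < z))
      have hset : row.set i x = row.take i ++ x :: row.drop (i + 1) := by
        rw [List.set_eq_take_append_cons_drop, if_pos h]
      have hrow : row = row.take i ++ row[i] :: row.drop (i + 1) := by
        conv_lhs => rw [← List.take_append_drop i row]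
        rw [List.drop_eq_getElem_cons h]
      erw [hset]
      simp only [List.flatten_cons, List.mem_append, hset,
        mem_flatten_rowInsert rest _ y]
      conv_rhs => rw [hrow]
      have : row.get ⟨i, h⟩ = row[i] := rfl
      erw [this]
      simp only [List.mem_append, List.mem_cons]
      tauto
    · rw [dif_neg h]
      simp only [List.flatten_cons, List.mem_append, List.mem_cons, List.mem_singleton]
      tauto

lemma mem_flatten_place (Q : Tab) (i lab y : ℕ) :
    y ∈ (place Q i lab).flatten ↔ y = lab ∨ y ∈ Q.flatten := by
  unfold place
  split_ifs with h
  · have hset : Q.set i (Q.getD i [] ++ [lab]) =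
        Q.take i ++ (Q.getD i [] ++ [lab]) :: Q.drop (i + 1) := by
      rw [List.set_eq_take_append_cons_drop, if_pos h]
    have hQd : Q = Q.take i ++ Q.getD i [] :: Q.drop (i + 1) := by
      conv_lhs => rw [← List.take_append_drop i Q]
      rw [List.drop_eq_getElem_cons h, List.getD_eq_getElem _ _ h]
    rw [hset]
    conv_rhs => rw [hQd]
    simp only [List.flatten_append, List.flatten_cons, List.mem_append, List.mem_cons,
      List.mem_singleton]
    tauto
  · simp only [List.flatten_append, List.flatten_cons, List.flatten_nil, List.mem_append,
      List.mem_singleton, List.mem_nil_iff]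
    tauto

lemma place_map (g : ℕ → ℕ) (Q : Tab) (i lab : ℕ) :
    place (mapTab g Q) i (g lab) = mapTab g (place Q i lab) := by
  unfold place
  simp only [mapTab_length]
  split_ifs with h
  · rw [mapTab_getD]
    rw [show (Q.getD i []).map g ++ [g lab] = (Q.getD i [] ++ [lab]).map g by simp]
    exact (List.map_set).symm
  · simp [mapTab]

lemma RSstep_fst_map {f : ℕ → ℕ} {Sp : ℕ → Prop}
    (hf : ∀ x y, Sp x → Sp y → (x < y ↔ f x < f y)) (P Q : Tab) (x lab : ℕ)
    (hx : Sp x) (hP : ∀ y ∈ P.flatten, Sp y) :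
    RSstep (mapTab f P, Q) (f x, lab) =
      (mapTab f (RSstep (P, Q) (x, lab)).1, (RSstep (P, Q) (x, lab)).2) := by
  unfold RSstep
  simp only
  rw [rowInsert_map hf P x hx hP]
  refine Prod.ext rfl ?_
  simp only
  congr 1
  rw [mapTab_length]
  exact findIdx_congr _ (fun m _ => by
    simp only [mapTab_getD, List.length_map])

lemma foldl_fst_map {f : ℕ → ℕ} {Sp : ℕ → Prop}
    (hf : ∀ x y, Sp x → Sp y → (x < y ↔ f x < f y)) :
    ∀ (word : List (ℕ × ℕ)) (P Q : Tab), (∀ y ∈ P.flatten, Sp y) → (∀ p ∈ word, Sp p.1) →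
      List.foldl RSstep (mapTab f P, Q) (word.map (fun p => (f p.1, p.2))) =
        (mapTab f (List.foldl RSstep (P, Q) word).1, (List.foldl RSstep (P, Q) word).2)
  | [], P, Q, _, _ => by simp
  | (x, lab) :: rest, P, Q, hP, hw => by
    simp only [List.map_cons, List.foldl_cons]
    rw [RSstep_fst_map hf P Q x lab (hw (x, lab) List.mem_cons_self) hP]
    have h1 : (RSstep (P, Q) (x, lab)).1 = rowInsert x P := rfl
    have hP' : ∀ y ∈ (RSstep (P, Q) (x, lab)).1.flatten, Sp y := by
      rw [h1]; intro y hy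
      rcases (mem_flatten_rowInsert P x y).1 hy with hyx | hy
      · rw [hyx]; exact hw (x, lab) List.mem_cons_self
      · exact hP y hy
    rw [foldl_fst_map hf rest (RSstep (P, Q) (x, lab)).1 (RSstep (P, Q) (x, lab)).2 hP'
      (fun p hp => hw p (List.mem_cons_of_mem _ hp))]

lemma RSstep_snd_map (g : ℕ → ℕ) (P Q : Tab) (x lab : ℕ) :
    RSstep (P, mapTab g Q) (x, g lab) =
      ((RSstep (P, Q) (x, lab)).1, mapTab g (RSstep (P, Q) (x, lab)).2) := by
  unfold RSstep
  simp only
  rw [place_map]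

lemma foldl_snd_map (g : ℕ → ℕ) :
    ∀ (word : List (ℕ × ℕ)) (P Q : Tab),
      List.foldl RSstep (P, mapTab g Q) (word.map (fun p => (p.1, g p.2))) =
        ((List.foldl RSstep (P, Q) word).1, mapTab g (List.foldl RSstep (P, Q) word).2)
  | [], P, Q => by simp
  | (x, lab) :: rest, P, Q => by
    simp only [List.map_cons, List.foldl_cons]
    rw [RSstep_snd_map g P Q x lab]
    rw [foldl_snd_map g rest (RSstep (P, Q) (x, lab)).1 (RSstep (P, Q) (x, lab)).2]

lemma mem_flatten_foldl_fst : ∀ (word : List (ℕ × ℕ)) (P Q : Tab) (y : ℕ),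
    (y ∈ (List.foldl RSstep (P, Q) word).1.flatten ↔ y ∈ P.flatten ∨ y ∈ word.map Prod.fst)
  | [], P, Q, y => by simp
  | (x, lab) :: rest, P, Q, y => by
    simp only [List.foldl_cons, List.map_cons]
    have heta : RSstep (P, Q) (x, lab) = ((RSstep (P, Q) (x, lab)).1, (RSstep (P, Q) (x, lab)).2) := rfl
    rw [heta, mem_flatten_foldl_fst rest _ _ y]
    have h1 : (RSstep (P, Q) (x, lab)).1 = rowInsert x P := rfl
    rw [h1, mem_flatten_rowInsert]
    simp only [List.mem_cons]
    tauto

lemma mem_flatten_foldl_snd : ∀ (word : List (ℕ × ℕ)) (P Q : Tab) (y : ℕ),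
    (y ∈ (List.foldl RSstep (P, Q) word).2.flatten ↔ y ∈ Q.flatten ∨ y ∈ word.map Prod.snd)
  | [], P, Q, y => by simp
  | (x, lab) :: rest, P, Q, y => by
    simp only [List.foldl_cons, List.map_cons]
    have heta : RSstep (P, Q) (x, lab) = ((RSstep (P, Q) (x, lab)).1, (RSstep (P, Q) (x, lab)).2) := rfl
    rw [heta, mem_flatten_foldl_snd rest _ _ y]
    have h2 : ∃ i, (RSstep (P, Q) (x, lab)).2 = place Q i lab := ⟨_, rfl⟩
    obtain ⟨i, hi⟩ := h2
    rw [hi, mem_flatten_place]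
    simp only [List.mem_cons]
    tauto

lemma labels_RSword_fst (word : List (ℕ × ℕ)) :
    labels (RSword word).1 = (word.map Prod.fst).toFinset := by
  ext y
  simp only [labels, List.mem_toFinset, RSword]
  rw [mem_flatten_foldl_fst word [] [] y]
  simp

lemma labels_RSword_snd (word : List (ℕ × ℕ)) :
    labels (RSword word).2 = (word.map Prod.snd).toFinset := by
  ext y
  simp only [labels, List.mem_toFinset, RSword]
  rw [mem_flatten_foldl_snd word [] [] y]
  simp

lemma flatten_mapTab (f : ℕ → ℕ) (T : Tab) : (mapTab f T).flatten = T.flatten.map f := by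
  induction T with
  | nil => rfl
  | cons row rest ih =>
    simp only [mapTab_cons, List.flatten_cons, ih, List.map_append]

lemma labels_mapTab (f : ℕ → ℕ) (T : Tab) : labels (mapTab f T) = (labels T).image f := by
  ext y
  simp only [labels, flatten_mapTab, List.mem_toFinset, Finset.mem_image, List.mem_map]

lemma rowOf_mapTab {f : ℕ → ℕ} (hinj : Function.Injective f) (T : Tab) (x : ℕ) :
    rowOf (mapTab f T) (f x) = rowOf T x := by
  unfold rowOf mapTab
  rw [findIdx_map']
  exact findIdx_congr _ (fun row _ => by
    simp only [decide_eq_decide]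
    exact List.mem_map_of_injective hinj)

lemma eTab_mapTab (f : ℕ → ℕ) (T : Tab) : eTab (mapTab f T) = eTab T := by
  unfold eTab
  rw [mapTab_length]
  exact Finset.sum_congr rfl fun i _ => by rw [mapTab_getD, List.length_map]

lemma sizeTab_mapTab (f : ℕ → ℕ) (T : Tab) : sizeTab (mapTab f T) = sizeTab T := by
  unfold sizeTab
  rw [flatten_mapTab, List.length_map]

lemma invTab_mapTab {f : ℕ → ℕ} (hinj : Function.Injective f) {Sp : ℕ → Prop}
    (hf : ∀ x y, Sp x → Sp y → (x < y ↔ f x < f y)) (T : Tab)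
    (hT : ∀ y ∈ labels T, Sp y) : invTab (mapTab f T) = invTab T := by
  unfold invTab
  rw [labels_mapTab]
  symm
  apply Finset.card_bij (fun p _ => (f p.1, f p.2))
  · rintro ⟨a, b⟩ hab
    simp only [Finset.mem_filter, Finset.mem_product] at hab ⊢
    obtain ⟨⟨ha, hb⟩, hlt, hrow⟩ := hab
    exact ⟨⟨Finset.mem_image_of_mem f ha, Finset.mem_image_of_mem f hb⟩,
      (hf _ _ (hT _ ha) (hT _ hb)).1 hlt,
      by rw [rowOf_mapTab hinj, rowOf_mapTab hinj]; exact hrow⟩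
  · rintro ⟨a, b⟩ _ ⟨c, d⟩ _ h
    simp only [Prod.mk.injEq] at h ⊢
    exact ⟨hinj h.1, hinj h.2⟩
  · rintro ⟨a, b⟩ hab
    simp only [Finset.mem_filter, Finset.mem_product, Finset.mem_image] at hab
    obtain ⟨⟨⟨a', ha', rfl⟩, ⟨b', hb', rfl⟩⟩, hlt, hrow⟩ := hab
    refine ⟨(a', b'), ?_, rfl⟩
    simp only [Finset.mem_filter, Finset.mem_product]
    exact ⟨⟨ha', hb'⟩, (hf _ _ (hT _ ha') (hT _ hb')).2 hlt,
      by rw [rowOf_mapTab hinj, rowOf_mapTab hinj] at hrow; exact hrow⟩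

lemma crossInv_mapTab {f : ℕ → ℕ} (hinj : Function.Injective f) (A B : Tab) :
    crossInv (mapTab f A) (mapTab f B) =
      ((labels A ×ˢ labels B).filter (fun p => f p.2 < f p.1)).card := by
  unfold crossInv
  rw [labels_mapTab, labels_mapTab]
  symm
  apply Finset.card_bij (fun p _ => (f p.1, f p.2))
  · rintro ⟨a, b⟩ hab
    simp only [Finset.mem_filter, Finset.mem_product] at hab ⊢
    exact ⟨⟨Finset.mem_image_of_mem f hab.1.1, Finset.mem_image_of_mem f hab.1.2⟩, hab.2⟩
  · rintro ⟨a, b⟩ _ ⟨c, d⟩ _ h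
    simp only [Prod.mk.injEq] at h ⊢
    exact ⟨hinj h.1, hinj h.2⟩
  · rintro ⟨a, b⟩ hab
    simp only [Finset.mem_filter, Finset.mem_product, Finset.mem_image] at hab
    obtain ⟨⟨⟨a', ha', rfl⟩, ⟨b', hb', rfl⟩⟩, hlt⟩ := hab
    refine ⟨(a', b'), ?_, rfl⟩
    simp only [Finset.mem_filter, Finset.mem_product]
    exact ⟨⟨ha', hb'⟩, hlt⟩

lemma crossInv_nswap_eq (j : ℕ) (A B : Tab) (h1 : ¬(j ∈ labels A ∧ j + 1 ∈ labels B))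
    (h2 : ¬(j + 1 ∈ labels A ∧ j ∈ labels B)) :
    crossInv (mapTab (nswap j) A) (mapTab (nswap j) B) = crossInv A B := by
  rw [crossInv_mapTab (nswap_inj j)]
  unfold crossInv
  congr 1
  apply Finset.filter_congr
  rintro ⟨a, b⟩ hab
  simp only [Finset.mem_product] at hab
  show nswap j b < nswap j a ↔ b < a
  apply nswap_lt_iff
  · rintro ⟨rfl, rfl⟩; exact h2 ⟨hab.1, hab.2⟩
  · rintro ⟨rfl, rfl⟩; exact h1 ⟨hab.1, hab.2⟩

lemma crossInv_nswap_succ (j : ℕ) (A B : Tab) (hA : j ∈ labels A) (hB : j + 1 ∈ labels B)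
    (hA' : j + 1 ∉ labels A) (hB' : j ∉ labels B) :
    crossInv (mapTab (nswap j) A) (mapTab (nswap j) B) = crossInv A B + 1 := by
  rw [crossInv_mapTab (nswap_inj j)]
  unfold crossInv
  have key : (labels A ×ˢ labels B).filter (fun p => nswap j p.2 < nswap j p.1) =
      insert (j, j + 1) ((labels A ×ˢ labels B).filter (fun p => p.2 < p.1)) := by
    ext ⟨a, b⟩
    simp only [Finset.mem_insert, Finset.mem_filter, Finset.mem_product, Prod.mk.injEq]
    constructor
    · rintro ⟨⟨ha, hb⟩, hlt⟩
      have hbj : b ≠ j := fun h => hB' (h ▸ hb)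
      by_cases hab : a = j ∧ b = j + 1
      · exact Or.inl hab
      · refine Or.inr ⟨⟨ha, hb⟩, ?_⟩
        rwa [nswap_lt_iff (fun h => hbj h.1) hab] at hlt
    · rintro (⟨ha', hb'⟩ | ⟨⟨ha, hb⟩, hlt⟩)
      · refine ⟨⟨?_, ?_⟩, ?_⟩
        · rw [ha']; exact hA
        · rw [hb']; exact hB
        · show nswap j b < nswap j a
          rw [ha', hb']
          unfold nswap; split_ifs <;> omega
      · have hbj : b ≠ j := fun h => hB' (h ▸ hb)
        have h2 : ¬(a = j ∧ b = j + 1) := fun h => by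
          rw [h.1, h.2] at hlt; omega
        refine ⟨⟨ha, hb⟩, ?_⟩
        rw [nswap_lt_iff (fun h => hbj h.1) h2]
        exact hlt
  rw [key, Finset.card_insert_of_notMem]
  intro hmem
  have h2 : (j + 1 : ℕ) < j := (Finset.mem_filter.1 hmem).2
  omega

lemma crossInv_nswap_pred (j : ℕ) (A B : Tab) (hA : j + 1 ∈ labels A) (hB : j ∈ labels B)
    (hA' : j ∉ labels A) (hB' : j + 1 ∉ labels B) :
    crossInv (mapTab (nswap j) A) (mapTab (nswap j) B) + 1 = crossInv A B := by
  rw [crossInv_mapTab (nswap_inj j)]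
  unfold crossInv
  have key : (labels A ×ˢ labels B).filter (fun p => p.2 < p.1) =
      insert (j + 1, j) ((labels A ×ˢ labels B).filter (fun p => nswap j p.2 < nswap j p.1)) := by
    ext ⟨a, b⟩
    simp only [Finset.mem_insert, Finset.mem_filter, Finset.mem_product, Prod.mk.injEq]
    constructor
    · rintro ⟨⟨ha, hb⟩, hlt⟩
      have haj : a ≠ j := fun h => hA' (h ▸ ha)
      by_cases hab : a = j + 1 ∧ b = j
      · exact Or.inl hab
      · refine Or.inr ⟨⟨ha, hb⟩, ?_⟩
        have h1 : ¬(b = j ∧ a = j + 1) := fun h => hab ⟨h.2, h.1⟩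
        rw [nswap_lt_iff h1 (fun h => haj h.1)]
        exact hlt
    · rintro (⟨ha', hb'⟩ | ⟨⟨ha, hb⟩, hlt⟩)
      · refine ⟨⟨?_, ?_⟩, ?_⟩
        · rw [ha']; exact hA
        · rw [hb']; exact hB
        · show b < a
          omega
      · have haj : a ≠ j := fun h => hA' (h ▸ ha)
        have h1 : ¬(b = j ∧ a = j + 1) := fun h => by
          rw [h.1, h.2] at hlt
          revert hlt; unfold nswap; split_ifs <;> omega
        refine ⟨⟨ha, hb⟩, ?_⟩
        rwa [nswap_lt_iff h1 (fun h => haj h.1)] at hlt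
  rw [key, Finset.card_insert_of_notMem]
  intro hmem
  have h2 : nswap j j < nswap j (j + 1) := (Finset.mem_filter.1 hmem).2
  revert h2; unfold nswap; split_ifs <;> omega

lemma invMulti_nswap {r : ℕ} (j : ℕ) (T : Fin r → Tab) (k0 l0 : Fin r) (hne : k0 ≠ l0)
    (hj : ∀ k, j ∈ labels (T k) ↔ k = k0) (hj1 : ∀ k, j + 1 ∈ labels (T k) ↔ k = l0) :
    invMulti (fun k => mapTab (nswap j) (T k)) = invMulti T + 1 ∨
      invMulti (fun k => mapTab (nswap j) (T k)) + 1 = invMulti T := by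
  have hinv : ∀ k, invTab (mapTab (nswap j) (T k)) = invTab (T k) := by
    intro k
    apply invTab_mapTab (nswap_inj j) (Sp := fun x => x ∈ labels (T k))
    · apply nswap_order
      rintro ⟨hu, hv⟩
      exact hne (((hj k).1 hu).symm.trans ((hj1 k).1 hv))
    · exact fun y hy => hy
  have hceq : ∀ k l : Fin r, ¬(k = k0 ∧ l = l0) → ¬(k = l0 ∧ l = k0) →
      crossInv (mapTab (nswap j) (T k)) (mapTab (nswap j) (T l)) = crossInv (T k) (T l) := by
    intro k l hx hy
    apply crossInv_nswap_eq
    · rintro ⟨ha, hb⟩; exact hx ⟨(hj k).1 ha, (hj1 l).1 hb⟩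
    · rintro ⟨ha, hb⟩; exact hy ⟨(hj1 k).1 ha, (hj l).1 hb⟩
  have hindic : (∑ k : Fin r, ∑ l : Fin r, if k = k0 ∧ l = l0 then 1 else 0) = 1 := by
    have h1 : ∀ k : Fin r, (∑ l : Fin r, if k = k0 ∧ l = l0 then (1 : ℕ) else 0) =
        if k = k0 then 1 else 0 := by
      intro k
      by_cases hk : k = k0 <;> simp [hk, Finset.sum_ite_eq' Finset.univ l0 (fun _ => (1 : ℕ))]
    rw [Finset.sum_congr rfl fun k _ => h1 k]
    simp [Finset.sum_ite_eq' Finset.univ k0 (fun _ => (1 : ℕ))]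
  rcases lt_or_gt_of_ne hne with hlt | hlt
  · left
    unfold invMulti
    have hpt : ∀ k l : Fin r,
        (if k < l then crossInv (mapTab (nswap j) (T k)) (mapTab (nswap j) (T l)) else 0) =
          (if k < l then crossInv (T k) (T l) else 0) + (if k = k0 ∧ l = l0 then 1 else 0) := by
      intro k l
      by_cases hk : k = k0 ∧ l = l0
      · obtain ⟨rfl, rfl⟩ := hk
        rw [if_pos hlt, if_pos hlt, if_pos ⟨rfl, rfl⟩,
          crossInv_nswap_succ j _ _ ((hj k).2 rfl) ((hj1 l).2 rfl)
            (fun hmem => hne ((hj1 k).1 hmem)) (fun hmem => hne (((hj l).1 hmem).symm))]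
      · rw [if_neg hk, add_zero]
        by_cases hkl : k < l
        · rw [if_pos hkl, if_pos hkl,
            hceq k l hk (by rintro ⟨rfl, rfl⟩; exact absurd hlt (lt_asymm hkl))]
        · rw [if_neg hkl, if_neg hkl]
    have hsum : (∑ k : Fin r, ∑ l : Fin r,
          if k < l then crossInv (mapTab (nswap j) (T k)) (mapTab (nswap j) (T l)) else 0) =
        (∑ k : Fin r, ∑ l : Fin r, if k < l then crossInv (T k) (T l) else 0) + 1 := by
      calc (∑ k : Fin r, ∑ l : Fin r,
            if k < l then crossInv (mapTab (nswap j) (T k)) (mapTab (nswap j) (T l)) else 0)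
          = ∑ k : Fin r, ∑ l : Fin r, ((if k < l then crossInv (T k) (T l) else 0) +
              (if k = k0 ∧ l = l0 then 1 else 0)) :=
            Finset.sum_congr rfl fun k _ => Finset.sum_congr rfl fun l _ => hpt k l
        _ = (∑ k : Fin r, ∑ l : Fin r, if k < l then crossInv (T k) (T l) else 0) +
              ∑ k : Fin r, ∑ l : Fin r, (if k = k0 ∧ l = l0 then 1 else 0) := by
            rw [← Finset.sum_add_distrib]
            exact Finset.sum_congr rfl fun k _ => Finset.sum_add_distrib
        _ = _ + 1 := by rw [hindic]
    have hA : (∑ k, invTab (mapTab (nswap j) (T k))) = ∑ k, invTab (T k) :=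
      Finset.sum_congr rfl fun k _ => hinv k
    simp only [invMulti]
    omega
  · right
    unfold invMulti
    have hpt : ∀ k l : Fin r,
        (if k < l then crossInv (T k) (T l) else 0) =
          (if k < l then crossInv (mapTab (nswap j) (T k)) (mapTab (nswap j) (T l)) else 0) +
            (if k = l0 ∧ l = k0 then 1 else 0) := by
      intro k l
      by_cases hk : k = l0 ∧ l = k0
      · obtain ⟨rfl, rfl⟩ := hk
        rw [if_pos hlt, if_pos hlt, if_pos ⟨rfl, rfl⟩]
        rw [← crossInv_nswap_pred j _ _ ((hj1 k).2 rfl) ((hj l).2 rfl)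
          (fun hmem => hne (((hj k).1 hmem).symm)) (fun hmem => hne ((hj1 l).1 hmem))]
      · rw [if_neg hk, add_zero]
        by_cases hkl : k < l
        · rw [if_pos hkl, if_pos hkl,
            hceq k l (by rintro ⟨rfl, rfl⟩; exact absurd hlt (lt_asymm hkl)) hk]
        · rw [if_neg hkl, if_neg hkl]
    have hindic' : (∑ k : Fin r, ∑ l : Fin r, if k = l0 ∧ l = k0 then (1:ℕ) else 0) = 1 := by
      have h1 : ∀ k : Fin r, (∑ l : Fin r, if k = l0 ∧ l = k0 then (1 : ℕ) else 0) =
          if k = l0 then 1 else 0 := by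
        intro k
        by_cases hk : k = l0 <;> simp [hk, Finset.sum_ite_eq' Finset.univ k0 (fun _ => (1 : ℕ))]
      rw [Finset.sum_congr rfl fun k _ => h1 k]
      simp [Finset.sum_ite_eq' Finset.univ l0 (fun _ => (1 : ℕ))]
    have hsum : (∑ k : Fin r, ∑ l : Fin r, if k < l then crossInv (T k) (T l) else 0) =
        (∑ k : Fin r, ∑ l : Fin r,
          if k < l then crossInv (mapTab (nswap j) (T k)) (mapTab (nswap j) (T l)) else 0) + 1 := by
      calc (∑ k : Fin r, ∑ l : Fin r, if k < l then crossInv (T k) (T l) else 0)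
          = ∑ k : Fin r, ∑ l : Fin r,
              ((if k < l then crossInv (mapTab (nswap j) (T k)) (mapTab (nswap j) (T l)) else 0) +
                (if k = l0 ∧ l = k0 then 1 else 0)) :=
            Finset.sum_congr rfl fun k _ => Finset.sum_congr rfl fun l _ => hpt k l
        _ = (∑ k : Fin r, ∑ l : Fin r,
              if k < l then crossInv (mapTab (nswap j) (T k)) (mapTab (nswap j) (T l)) else 0) +
              ∑ k : Fin r, ∑ l : Fin r, (if k = l0 ∧ l = k0 then 1 else 0) := by
            rw [← Finset.sum_add_distrib]
            exact Finset.sum_congr rfl fun k _ => Finset.sum_add_distrib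
        _ = _ + 1 := by rw [hindic']
    have hA : (∑ k, invTab (mapTab (nswap j) (T k))) = ∑ k, invTab (T k) :=
      Finset.sum_congr rfl fun k _ => hinv k
    simp only [invMulti]
    omega

lemma signMulti_nswap {r : ℕ} (j : ℕ) (T : Fin r → Tab) (k0 l0 : Fin r) (hne : k0 ≠ l0)
    (hj : ∀ k, j ∈ labels (T k) ↔ k = k0) (hj1 : ∀ k, j + 1 ∈ labels (T k) ↔ k = l0) :
    signMulti (fun k => mapTab (nswap j) (T k)) = -signMulti T := by
  unfold signMulti
  rcases invMulti_nswap j T k0 l0 hne hj hj1 with h | h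
  · rw [h, pow_succ]; ring
  · rw [← h, pow_succ]; ring

section Words

variable {r n : ℕ}

lemma swap_val_nswap (j : ℕ) (h1 : 1 ≤ j) (h2 : j + 1 ≤ n) (m : Fin n) :
    ((Equiv.swap (⟨j - 1, by omega⟩ : Fin n) ⟨j, by omega⟩) m : ℕ) + 1 =
      nswap j ((m : ℕ) + 1) := by
  rcases eq_or_ne m ⟨j - 1, by omega⟩ with rfl | hm1
  · rw [Equiv.swap_apply_left]
    show j + 1 = nswap j (j - 1 + 1)
    unfold nswap; split_ifs <;> omega
  · rcases eq_or_ne m ⟨j, by omega⟩ with rfl | hm2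
    · rw [Equiv.swap_apply_right]
      show j - 1 + 1 = nswap j (j + 1)
      unfold nswap; split_ifs <;> omega
    · rw [Equiv.swap_apply_of_ne_of_ne hm1 hm2]
      have hv1 : (m : ℕ) ≠ j - 1 := fun h => hm1 (Fin.ext (by simpa using h))
      have hv2 : (m : ℕ) ≠ j := fun h => hm2 (Fin.ext (by simpa using h))
      unfold nswap
      rw [if_neg (by omega), if_neg (by omega)]

lemma mem_map_fst_wordPairs (w : GW r n) (k c : ℕ) :
    c ∈ (wordPairs w k).map Prod.fst ↔ ∃ i : Fin n, (w.a i).val = k ∧ (w.σ i : ℕ) + 1 = c := by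
  simp only [wordPairs, labelIdx, List.map_map, List.mem_map, List.mem_filter,
    List.mem_finRange, true_and, Function.comp, decide_eq_true_eq]

lemma mem_map_snd_wordPairs (w : GW r n) (k c : ℕ) :
    c ∈ (wordPairs w k).map Prod.snd ↔ ∃ i : Fin n, (w.a i).val = k ∧ (i : ℕ) + 1 = c := by
  simp only [wordPairs, labelIdx, List.map_map, List.mem_map, List.mem_filter,
    List.mem_finRange, true_and, Function.comp, decide_eq_true_eq]

lemma wordPairs_Lop (w : GW r n) (j : ℕ) (h1 : 1 ≤ j) (h2 : j + 1 ≤ n) (k : ℕ) :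
    wordPairs (Lop w j h1 h2) k = (wordPairs w k).map (fun p => (nswap j p.1, p.2)) := by
  unfold wordPairs Lop labelIdx
  have ha : ∀ i : Fin n, (sEl r n j h1 h2 * w).a i = w.a i := by
    intro i; simp [sEl]
  have hσ : ∀ i : Fin n, ((sEl r n j h1 h2 * w).σ i : ℕ) + 1 = nswap j ((w.σ i : ℕ) + 1) := by
    intro i
    rw [GW.mul_sigma, Equiv.Perm.mul_apply]
    exact swap_val_nswap j h1 h2 (w.σ i)
  simp only [ha, List.map_map]
  exact List.map_congr_left fun i _ => by
    simp only [Function.comp]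
    exact Prod.ext (hσ i) rfl

lemma take_cons_cons_drop {α : Type*} (l : List α) (m : ℕ) (h : m + 1 < l.length) :
    l = l.take m ++ l[m] :: l[m + 1] :: l.drop (m + 2) := by
  conv_lhs => rw [← List.take_append_drop m l]
  rw [List.drop_eq_getElem_cons (by omega), List.drop_eq_getElem_cons (by omega)]

lemma map_eq_self_of_fixed {α : Type*} {f : α → α} :
    ∀ (L : List α), (∀ i ∈ L, f i = i) → L.map f = L := by
  intro L hL
  conv_rhs => rw [← List.map_id L]
  exact List.map_congr_left hL

set_option maxHeartbeats 1600000 in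
lemma wordPairs_Rop [NeZero r] (w : GW r n) (j : ℕ) (h1 : 1 ≤ j) (h2 : j + 1 ≤ n)
    (ha : RightAdm w j h1 h2) (k : ℕ) :
    wordPairs (Rop w j h1 h2) k = (wordPairs w k).map (fun p => (p.1, nswap j p.2)) := by
  set x : Fin n := ⟨j - 1, by omega⟩ with hxdef
  set y : Fin n := ⟨j, by omega⟩ with hydef
  set sw : Equiv.Perm (Fin n) := Equiv.swap x y with hswdef
  set A := (List.finRange n).take (j - 1) with hAdef
  set B := (List.finRange n).drop (j + 1) with hBdef
  have hlen : (List.finRange n).length = n := List.length_finRange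
  have hdecomp : List.finRange n = A ++ x :: y :: B := by
    have hd := take_cons_cons_drop (List.finRange n) (j - 1) (by omega)
    have e1 : j - 1 + 1 = j := by omega
    have e2 : j - 1 + 2 = j + 1 := by omega
    simp only [e1, e2] at hd
    have hg1 : (List.finRange n)[j - 1]'(by omega) = x := by
      apply Fin.ext
      simp [List.getElem_finRange, hxdef]
    have hg2 : (List.finRange n)[j]'(by omega) = y := by
      apply Fin.ext
      simp [List.getElem_finRange, hydef]
    rw [hg1, hg2] at hd
    exact hd
  have hnd := List.nodup_finRange n
  rw [hdecomp, List.nodup_append] at hnd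
  obtain ⟨hndA, hndM, hdisj⟩ := hnd
  have hxA : x ∉ A := fun h => hdisj x h x (by simp) rfl
  have hyA : y ∉ A := fun h => hdisj y h y (by simp) rfl
  have hxB : x ∉ B := by
    rcases List.nodup_cons.1 hndM with ⟨hxm, _⟩
    exact fun h => hxm (by simp [h])
  have hyB : y ∉ B := by
    rcases List.nodup_cons.1 hndM with ⟨_, hnd2⟩
    rcases List.nodup_cons.1 hnd2 with ⟨hym, _⟩
    exact hym
  have hswx : sw x = y := Equiv.swap_apply_left x y
  have hswy : sw y = x := Equiv.swap_apply_right x y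
  have hswA : ∀ i ∈ A, sw i = i := fun i hi =>
    Equiv.swap_apply_of_ne_of_ne (fun h => hxA (h ▸ hi)) (fun h => hyA (h ▸ hi))
  have hswB : ∀ i ∈ B, sw i = i := fun i hi =>
    Equiv.swap_apply_of_ne_of_ne (fun h => hxB (h ▸ hi)) (fun h => hyB (h ▸ hi))
  have hmap : (List.finRange n).map sw = A ++ y :: x :: B := by
    rw [hdecomp, List.map_append, List.map_cons, List.map_cons, hswx, hswy,
      map_eq_self_of_fixed A hswA, map_eq_self_of_fixed B hswB]
  set p : Fin n → Bool := fun m => decide ((w.a m).val = k) with hpdef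
  have hpxy : ¬(p x = true ∧ p y = true) := by
    rintro ⟨hpx, hpy⟩
    simp only [hpdef, decide_eq_true_eq] at hpx hpy
    exact ha (ZMod.val_injective r (hpx.trans hpy.symm))
  have hfilt : (A ++ y :: x :: B).filter p = (A ++ x :: y :: B).filter p := by
    rw [List.filter_append, List.filter_append]
    congr 1
    cases hb1 : p x <;> cases hb2 : p y
    · simp [List.filter_cons, hb1, hb2]
    · simp [List.filter_cons, hb1, hb2]
    · simp [List.filter_cons, hb1, hb2]
    · exact absurd ⟨hb1, hb2⟩ hpxy
  have haR : ∀ i : Fin n, (Rop w j h1 h2).a i = w.a (sw i) := by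
    intro i
    show w.a ((Equiv.swap x y) i) + (0 : ZMod r) = w.a (sw i)
    rw [← hswdef, add_zero]
  have hσR : ∀ i : Fin n, (Rop w j h1 h2).σ i = w.σ (sw i) := by
    intro i
    show w.σ ((Equiv.swap x y) i) = w.σ (sw i)
    rw [← hswdef]
  have hnsw : ∀ i : Fin n, nswap j ((sw i : ℕ) + 1) = (i : ℕ) + 1 := by
    intro i
    have hs := swap_val_nswap (n := n) j h1 h2 i
    have hxy : (Equiv.swap (⟨j - 1, by omega⟩ : Fin n) ⟨j, by omega⟩) i = sw i := rfl
    rw [hxy] at hs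
    rw [hs, nswap_nswap]
  have hlabel : (labelIdx (Rop w j h1 h2) k).map sw = labelIdx w k := by
    unfold labelIdx
    have hpred : (fun i : Fin n => decide (((Rop w j h1 h2).a i).val = k)) = (p ∘ sw) := by
      funext i
      rw [show ((Rop w j h1 h2).a i) = w.a (sw i) from haR i]
      rfl
    rw [hpred, ← List.filter_map (f := sw) (l := List.finRange n), hmap, hfilt, ← hdecomp]
  unfold wordPairs
  rw [← hlabel, List.map_map, List.map_map]
  apply List.map_congr_left
  intro i _
  simp only [Function.comp]
  refine Prod.ext ?_ ?_
  · show ((Rop w j h1 h2).σ i : ℕ) + 1 = (w.σ (sw i) : ℕ) + 1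
    rw [hσR i]
  · show ((i : ℕ)) + 1 = nswap j ((sw i : ℕ) + 1)
    exact (hnsw i).symm

end Words

end AdmAux

open AdmAux

set_option maxHeartbeats 4000000

/-- If `w'` is obtained from `w` by a single admissible transformation, then
`π_i w' = -π_i w` for every `0 ≤ i ≤ r - 1`. -/
theorem piStat_neg_of_admStep (r n : ℕ) (hr : 1 ≤ r) (hn : 1 ≤ n)
    (w w' : GW r n) (h : AdmStep r n w w') (i : ℕ) (hi : i ≤ r - 1) :
    piStat r n i w' = -piStat r n i w := by
  haveI : NeZero r := ⟨by omega⟩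
  cases h with
  | left j h1 h2 ha =>
    obtain ⟨k0n, hk0def⟩ : ∃ m, m = (w.a (w.σ⁻¹ ⟨j - 1, by omega⟩)).val := ⟨_, rfl⟩
    obtain ⟨l0n, hl0def⟩ : ∃ m, m = (w.a (w.σ⁻¹ ⟨j, by omega⟩)).val := ⟨_, rfl⟩
    have hk0lt : k0n < r := by rw [hk0def]; exact ZMod.val_lt _
    have hl0lt : l0n < r := by rw [hl0def]; exact ZMod.val_lt _
    have hkl : k0n ≠ l0n := fun hh => by
      rw [hk0def, hl0def] at hh
      exact ha (ZMod.val_injective r hh)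
    have hVj : ∀ k : ℕ, (j ∈ (wordPairs w k).map Prod.fst ↔ k = k0n) := by
      intro k
      rw [mem_map_fst_wordPairs]
      constructor
      · rintro ⟨i', hik, hiv⟩
        have hσ : w.σ i' = ⟨j - 1, by omega⟩ := by
          apply Fin.ext; show (w.σ i' : ℕ) = j - 1; omega
        have hinv : w.σ⁻¹ ⟨j - 1, by omega⟩ = i' := by
          rw [← hσ, Equiv.Perm.inv_def, Equiv.symm_apply_apply]
        rw [hk0def, hinv, hik]
      · rintro rfl
        refine ⟨w.σ⁻¹ ⟨j - 1, by omega⟩, hk0def.symm, ?_⟩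
        rw [Equiv.Perm.inv_def, Equiv.apply_symm_apply]
        show j - 1 + 1 = j
        omega
    have hVj1 : ∀ k : ℕ, (j + 1 ∈ (wordPairs w k).map Prod.fst ↔ k = l0n) := by
      intro k
      rw [mem_map_fst_wordPairs]
      constructor
      · rintro ⟨i', hik, hiv⟩
        have hσ : w.σ i' = ⟨j, by omega⟩ := by
          apply Fin.ext; show (w.σ i' : ℕ) = j; omega
        have hinv : w.σ⁻¹ ⟨j, by omega⟩ = i' := by
          rw [← hσ, Equiv.Perm.inv_def, Equiv.symm_apply_apply]
        rw [hl0def, hinv, hik]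
      · rintro rfl
        exact ⟨w.σ⁻¹ ⟨j, by omega⟩, hl0def.symm, by rw [Equiv.Perm.inv_def, Equiv.apply_symm_apply]⟩
    have hRS : ∀ k : ℕ, RSword (wordPairs (Lop w j h1 h2) k) =
        (mapTab (nswap j) (RSword (wordPairs w k)).1, (RSword (wordPairs w k)).2) := by
      intro k
      rw [wordPairs_Lop w j h1 h2 k]
      unfold RSword
      exact foldl_fst_map (Sp := fun c => c ∈ (wordPairs w k).map Prod.fst)
        (nswap_order (by
          rintro ⟨hu, hv⟩
          exact hkl (((hVj k).1 hu).symm.trans ((hVj1 k).1 hv))))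
        (wordPairs w k) [] [] (by simp) (fun p hp => List.mem_map_of_mem hp)
    have hP : Ptab (Lop w j h1 h2) = fun k => mapTab (nswap j) (Ptab w k) := by
      funext k
      unfold Ptab
      rw [hRS (k : ℕ)]
    have hQ : Qtab (Lop w j h1 h2) = Qtab w := by
      funext k
      unfold Qtab
      rw [hRS (k : ℕ)]
    have hjlab : ∀ k : Fin r, (j ∈ labels (Ptab w k) ↔ k = ⟨k0n, hk0lt⟩) := by
      intro k
      unfold Ptab
      rw [labels_RSword_fst, List.mem_toFinset, hVj (k : ℕ)]
      constructor
      · intro hkk; exact Fin.ext hkk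
      · intro hkk; rw [hkk]
    have hj1lab : ∀ k : Fin r, (j + 1 ∈ labels (Ptab w k) ↔ k = ⟨l0n, hl0lt⟩) := by
      intro k
      unfold Ptab
      rw [labels_RSword_fst, List.mem_toFinset, hVj1 (k : ℕ)]
      constructor
      · intro hkk; exact Fin.ext hkk
      · intro hkk; rw [hkk]
    have hsign : signMulti (fun k => mapTab (nswap j) (Ptab w k)) = -signMulti (Ptab w) :=
      signMulti_nswap j (Ptab w) ⟨k0n, hk0lt⟩ ⟨l0n, hl0lt⟩
        (fun hh => hkl (congrArg Fin.val hh)) hjlab hj1lab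
    have he : eMulti (fun k => mapTab (nswap j) (Ptab w k)) = eMulti (Ptab w) := by
      unfold eMulti
      exact Finset.sum_congr rfl fun k _ => eTab_mapTab _ _
    have hts : twoSpin (fun k => mapTab (nswap j) (Ptab w k)) = twoSpin (Ptab w) := by
      unfold twoSpin
      exact Finset.sum_congr rfl fun k _ => by rw [sizeTab_mapTab]
    have hsp : spin (fun k => mapTab (nswap j) (Ptab w k)) = spin (Ptab w) := by
      unfold spin; rw [hts]
    unfold piStat
    rw [hP, hQ, he, hsp, hsign]
    ring
  | right j h1 h2 ha =>
    obtain ⟨k0n, hk0def⟩ : ∃ m, m = (w.a ⟨j - 1, by omega⟩).val := ⟨_, rfl⟩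
    obtain ⟨l0n, hl0def⟩ : ∃ m, m = (w.a ⟨j, by omega⟩).val := ⟨_, rfl⟩
    have hk0lt : k0n < r := by rw [hk0def]; exact ZMod.val_lt _
    have hl0lt : l0n < r := by rw [hl0def]; exact ZMod.val_lt _
    have hkl : k0n ≠ l0n := fun hh => by
      rw [hk0def, hl0def] at hh
      exact ha (ZMod.val_injective r hh)
    have hVj : ∀ k : ℕ, (j ∈ (wordPairs w k).map Prod.snd ↔ k = k0n) := by
      intro k
      rw [mem_map_snd_wordPairs]
      constructor
      · rintro ⟨i', hik, hiv⟩
        have hieq : i' = ⟨j - 1, by omega⟩ := by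
          apply Fin.ext; show (i' : ℕ) = j - 1; omega
        rw [hk0def, ← hieq, hik]
      · rintro rfl
        refine ⟨⟨j - 1, by omega⟩, hk0def.symm, ?_⟩
        show j - 1 + 1 = j
        omega
    have hVj1 : ∀ k : ℕ, (j + 1 ∈ (wordPairs w k).map Prod.snd ↔ k = l0n) := by
      intro k
      rw [mem_map_snd_wordPairs]
      constructor
      · rintro ⟨i', hik, hiv⟩
        have hieq : i' = ⟨j, by omega⟩ := by
          apply Fin.ext; show (i' : ℕ) = j; omega
        rw [hl0def, ← hieq, hik]
      · rintro rfl
        exact ⟨⟨j, by omega⟩, hl0def.symm, rfl⟩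
    have hRS : ∀ k : ℕ, RSword (wordPairs (Rop w j h1 h2) k) =
        ((RSword (wordPairs w k)).1, mapTab (nswap j) (RSword (wordPairs w k)).2) := by
      intro k
      rw [wordPairs_Rop w j h1 h2 ha k]
      unfold RSword
      exact foldl_snd_map (nswap j) (wordPairs w k) [] []
    have hP : Ptab (Rop w j h1 h2) = Ptab w := by
      funext k
      unfold Ptab
      rw [hRS (k : ℕ)]
    have hQ : Qtab (Rop w j h1 h2) = fun k => mapTab (nswap j) (Qtab w k) := by
      funext k
      unfold Qtab
      rw [hRS (k : ℕ)]
    have hjlab : ∀ k : Fin r, (j ∈ labels (Qtab w k) ↔ k = ⟨k0n, hk0lt⟩) := by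
      intro k
      unfold Qtab
      rw [labels_RSword_snd, List.mem_toFinset, hVj (k : ℕ)]
      constructor
      · intro hkk; exact Fin.ext hkk
      · intro hkk; rw [hkk]
    have hj1lab : ∀ k : Fin r, (j + 1 ∈ labels (Qtab w k) ↔ k = ⟨l0n, hl0lt⟩) := by
      intro k
      unfold Qtab
      rw [labels_RSword_snd, List.mem_toFinset, hVj1 (k : ℕ)]
      constructor
      · intro hkk; exact Fin.ext hkk
      · intro hkk; rw [hkk]
    have hsign : signMulti (fun k => mapTab (nswap j) (Qtab w k)) = -signMulti (Qtab w) :=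
      signMulti_nswap j (Qtab w) ⟨k0n, hk0lt⟩ ⟨l0n, hl0lt⟩
        (fun hh => hkl (congrArg Fin.val hh)) hjlab hj1lab
    have hts : twoSpin (fun k => mapTab (nswap j) (Qtab w k)) = twoSpin (Qtab w) := by
      unfold twoSpin
      exact Finset.sum_congr rfl fun k _ => by rw [sizeTab_mapTab]
    have hsp : spin (fun k => mapTab (nswap j) (Qtab w k)) = spin (Qtab w) := by
      unfold spin; rw [hts]
    unfold piStat
    rw [hP, hQ, hsp, hsign]
    ring
end

section
/- Let w ∈ W_n be ascending with RS(w) = (P,Q), let n_k denote the common set of labels of the component tableaux P_k and Q_k, let u_k be the permutation of the ordered set n_k whose classical Robinson–Schensted image is (P_k,Q_k) (with u_k the identity if n_k is empty), each viewed as a permutation matrix in W_n fixing all other values, and let u_r = [ζ^{a_1}·1, ζ^{a_2}·2, …, ζ^{a_n}·n] be the diagonal part of w. Then w = u_0·u_1⋯u_{r−1}·u_r, and consequently sgn_i(w) = sgn(u_0)·sgn(u_1)⋯sgn(u_{r−1})·(ζ^i)^{a_1+⋯+a_n} for each 0 ≤ i ≤ r−1. -/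
open scoped BigOperators

namespace RSproof
open List

/-- index where `x` bumps in `row`. -/
abbrev bIdx (x : ℕ) (row : List ℕ) : ℕ := row.findIdx (fun y => decide (x < y))

lemma set_self (l : List ℕ) (i : ℕ) (h : i < l.length) : l.set i l[i] = l := by
  apply List.ext_getElem <;> simp [List.getElem_set]

lemma sorted_getElem {row : List ℕ} (h : List.Chain' (· < ·) row) {i j : ℕ}
    (hi : i < row.length) (hj : j < row.length) (hij : i < j) : row[i] < row[j] :=
  (List.pairwise_iff_getElem.mp (List.isChain_iff_pairwise.mp h)) i j hi hj hij

lemma lt_of_bIdx {x : ℕ} {row : List ℕ} (hp : bIdx x row < row.length) :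
    x < row[bIdx x row] := by
  have := List.findIdx_getElem (w := hp); simpa using this

lemma getElem_lt_of_lt_bIdx {x : ℕ} {row : List ℕ} (hx : x ∉ row) {q : ℕ}
    (hq : q < bIdx x row) (hql : q < row.length) : row[q] < x := by
  have h1 : ¬ (x < row[q]) := by simpa using List.not_of_lt_findIdx hq
  have h2 : row[q] ≠ x := fun e => hx (e ▸ (List.getElem_mem _))
  omega

lemma chain'_set {x : ℕ} {row : List ℕ} (h : List.Chain' (· < ·) row) (hx : x ∉ row)
    (hp : bIdx x row < row.length) :
    List.Chain' (· < ·) (row.set (bIdx x row) x) := by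
  unfold List.Chain' at h ⊢
  rw [List.isChain_iff_pairwise, List.pairwise_iff_getElem] at h ⊢
  intro i j hi hj hij
  simp only [List.length_set] at hi hj
  simp only [List.getElem_set]
  split
  · -- i = bIdx
    rename_i hib
    split
    · omega
    · rename_i hjb
      have h1 : x < row[bIdx x row] := lt_of_bIdx hp
      rcases lt_or_gt_of_ne (fun e => hjb e.symm) with hc | hc
      · omega
      · exact h1.trans (sorted_getElem (List.isChain_iff_pairwise.mpr (List.pairwise_iff_getElem.mpr h)) hp hj (by omega))
  · rename_i hib
    split
    · -- j = bIdx
      rename_i hjb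
      have : i < bIdx x row := by omega
      exact getElem_lt_of_lt_bIdx hx this hi
    · exact h i j hi hj hij

end RSproof
namespace RSproof
open List

lemma coe_append_ms (l m : List ℕ) : (↑(l ++ m) : Multiset ℕ) = ↑l + ↑m := rfl

lemma rowInsert_perm (x : ℕ) (P : Tab) : (rowInsert x P).flatten.Perm (x :: P.flatten) := by
  induction P generalizing x with
  | nil => simp [rowInsert]
  | cons row rest ih =>
    rw [rowInsert]
    simp only [List.get_eq_getElem]
    split
    · rename_i h
      set p := bIdx x row with hp
      simp only [List.flatten_cons]
      have hrow : row = row.take p ++ row[p] :: row.drop (p+1) := by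
        conv_lhs => rw [← List.take_append_drop p row]
        congr 1
        exact (List.drop_eq_getElem_cons h)
      have hset : row.set p x = row.take p ++ x :: row.drop (p+1) := by
        rw [List.set_eq_take_append_cons_drop, if_pos h]
      refine (List.Perm.append_left _ (ih _)).trans ?_
      rw [← Multiset.coe_eq_coe]
      conv_rhs => rw [hrow]
      rw [hset]
      simp only [coe_append_ms, ← Multiset.cons_coe, Multiset.add_cons, Multiset.cons_add]
      abel_nf
      rw [Multiset.cons_swap]
    · simp only [List.flatten_cons]
      rw [← Multiset.coe_eq_coe]
      simp only [coe_append_ms, ← Multiset.cons_coe, Multiset.add_cons, Multiset.cons_add]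
      simp

lemma mem_rowInsert {z x : ℕ} {P : Tab} (hz : z ∈ (rowInsert x P).flatten) :
    z = x ∨ z ∈ P.flatten := by
  have := (rowInsert_perm x P).mem_iff.mp hz
  simpa using this

/-- all rows sorted -/
def Rows (P : Tab) : Prop := ∀ row ∈ P, List.Chain' (· < ·) row

lemma rows_rowInsert {x : ℕ} {P : Tab} (hP : Rows P) (hnd : P.flatten.Nodup)
    (hx : x ∉ P.flatten) : Rows (rowInsert x P) := by
  induction P generalizing x with
  | nil =>
    intro row hrow
    simp [rowInsert] at hrow
    subst hrow; exact List.isChain_singleton _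
  | cons row rest ih =>
    rw [rowInsert]
    split
    · rename_i h
      intro row' hrow'
      rw [List.mem_cons] at hrow'
      rcases hrow' with h1 | h1
      · subst h1
        exact chain'_set (hP row (by simp)) (fun hc => hx (by simp [hc])) h
      · have hnd' : rest.flatten.Nodup := by
          simp only [List.flatten_cons] at hnd
          exact (List.nodup_append.mp hnd).2.1
        have hy : row[bIdx x row] ∉ rest.flatten := by
          intro hc
          simp only [List.flatten_cons, List.nodup_append] at hnd
          exact hnd.2.2 _ (List.getElem_mem _) _ hc rfl
        exact ih (fun r hr => hP r (by simp [hr])) hnd' hy _ h1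
    · intro row' hrow'
      rw [List.mem_cons] at hrow'
      rcases hrow' with h1 | h1
      · subst h1
        rename_i hnb
        -- row ++ [x] sorted : row sorted and all elements < x
        unfold List.Chain'
        rw [List.isChain_iff_pairwise, List.pairwise_iff_getElem]
        intro i j hi hj hij
        have hb : bIdx x row = row.length := by
          have h1 : bIdx x row ≤ row.length := List.findIdx_le_length
          have h2 : ¬ bIdx x row < row.length := hnb
          omega
        have hlen : (row ++ [x]).length = row.length + 1 := by simp
        rw [hlen] at hi hj
        rcases Nat.lt_or_ge j row.length with hj' | hj'
        · rw [List.getElem_append_left (by omega), List.getElem_append_left hj']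
          exact sorted_getElem (hP row (by simp)) (by omega) hj' hij
        · have hj2 : j = row.length := by omega
          have hi2 : i < row.length := by omega
          rw [List.getElem_append_left hi2]
          have : (row ++ [x])[j] = x := by
            subst hj2
            simp
          rw [this]
          exact getElem_lt_of_lt_bIdx (fun hc => hx (by simp [hc])) (by omega) hi2
      · exact hP row' (by simp [h1])

end RSproof
namespace RSproof
open List

def bumpShape (s : List ℕ) (i : ℕ) : List ℕ :=
  if i < s.length then s.set i (s.getD i 0 + 1) else s ++ [1]

lemma bumpShape_cons (a : ℕ) (s : List ℕ) (i : ℕ) :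
    bumpShape (a :: s) (i + 1) = a :: bumpShape s i := by
  simp only [bumpShape, List.length_cons, Nat.add_lt_add_iff_right, List.getD_cons_succ]
  split <;> simp

lemma length_shape (P : Tab) : (shape P).length = P.length := by simp [shape]

lemma shape_getD (P : Tab) (i : ℕ) : (shape P).getD i 0 = (P.getD i []).length := by
  induction P generalizing i with
  | nil => simp [shape]
  | cons row rest ih =>
    cases i with
    | zero => simp [shape]
    | succ j => simpa [shape] using ih j

lemma shape_rowInsert (x : ℕ) (P : Tab) :
    ∃ i, i ≤ P.length ∧ shape (rowInsert x P) = bumpShape (shape P) i := by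
  induction P generalizing x with
  | nil => exact ⟨0, le_refl _, by simp [rowInsert, shape, bumpShape]⟩
  | cons row rest ih =>
    rw [rowInsert]
    split
    · rename_i h
      obtain ⟨i, hi, hs⟩ := ih (row.get ⟨bIdx x row, h⟩)
      refine ⟨i + 1, by simpa using hi, ?_⟩
      rw [show shape (row :: rest) = row.length :: shape rest from rfl, bumpShape_cons]
      simp only [shape, List.map_cons, List.length_set]
      rw [← shape, ← shape, hs]
    · refine ⟨0, by omega, ?_⟩
      simp [shape, bumpShape]

lemma findIdx_eq_of_unique {p : ℕ → Bool} {L : List ℕ} {j₀ : ℕ} (h0 : j₀ < L.length)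
    (hj : p L[j₀] = true) (huniq : ∀ j (_ : j < L.length), p L[j] = true → j = j₀) :
    L.findIdx p = j₀ := by
  have h1 : L.findIdx p < L.length :=
    List.findIdx_lt_length_of_exists ⟨L[j₀], List.getElem_mem _, hj⟩
  exact huniq _ h1 (List.findIdx_getElem (w := h1))

lemma length_bumpShape (s : List ℕ) (i : ℕ) :
    (bumpShape s i).length = if i < s.length then s.length else s.length + 1 := by
  simp [bumpShape]; split <;> simp

lemma getD_bumpShape_self (s : List ℕ) (i : ℕ) (hi : i ≤ s.length) :
    (bumpShape s i).getD i 0 = s.getD i 0 + 1 := by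
  unfold bumpShape
  split
  · rename_i h
    rw [List.getD_eq_getElem _ _ (by simpa using h), List.getElem_set_self]
  · rename_i h
    have hi2 : i = s.length := by omega
    subst hi2
    rw [List.getD_eq_getElem _ _ (by simp), List.getD_eq_default _ _ (le_refl _)]
    simp [List.getElem_append_right]

lemma getD_bumpShape_ne (s : List ℕ) (i j : ℕ) (hi : i ≤ s.length) (hij : j ≠ i) :
    (bumpShape s i).getD j 0 = s.getD j 0 := by
  unfold bumpShape
  split
  · rcases Nat.lt_or_ge j s.length with h | h
    · rw [List.getD_eq_getElem _ _ (by simpa using h), List.getD_eq_getElem _ _ h,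
        List.getElem_set, if_neg (fun hc => hij hc.symm)]
    · rw [List.getD_eq_default _ _ (by simpa using h), List.getD_eq_default _ _ h]
  · rcases Nat.lt_or_ge j s.length with h | h
    · rw [List.getD_eq_getElem _ _ (by simp; omega), List.getD_eq_getElem _ _ h,
        List.getElem_append_left h]
    · rename_i hns
      have : s.length + 1 ≤ j := by omega
      rw [List.getD_eq_default _ _ (by simpa using this), List.getD_eq_default _ _ h]

end RSproof
namespace RSproof
open List

lemma RSstep_findIdx (x : ℕ) (P : Tab) {i₀ : ℕ} (hi₀ : i₀ ≤ P.length)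
    (hs : shape (rowInsert x P) = bumpShape (shape P) i₀) :
    (List.range (rowInsert x P).length).findIdx
      (fun i => decide ((P.getD i []).length < ((rowInsert x P).getD i []).length)) = i₀ := by
  have hsl : (shape P).length = P.length := length_shape P
  have hlen : (rowInsert x P).length = if i₀ < P.length then P.length else P.length + 1 := by
    rw [← length_shape (rowInsert x P), hs, length_bumpShape, hsl]
  have hi₀lt : i₀ < (rowInsert x P).length := by
    rw [hlen]; split <;> omega
  apply findIdx_eq_of_unique (by simpa using hi₀lt)
  · rw [List.getElem_range]
    simp only [decide_eq_true_eq]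
    rw [← shape_getD, ← shape_getD, hs, getD_bumpShape_self _ _ (by omega)]
    omega
  · intro j hj hq
    rw [List.length_range] at hj
    rw [List.getElem_range] at hq
    simp only [decide_eq_true_eq] at hq
    by_contra hne
    rw [← shape_getD, ← shape_getD, hs, getD_bumpShape_ne _ _ _ (by omega) hne] at hq
    omega

lemma shape_place (Q : Tab) (i l : ℕ) (hi : i ≤ Q.length) :
    shape (place Q i l) = bumpShape (shape Q) i := by
  unfold place bumpShape
  rw [length_shape]
  split
  · rename_i h
    show (Q.set i _).map _ = _
    rw [List.map_set]
    congr 1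
    rw [shape_getD]
    simp
  · simp [shape]

lemma place_flatten_perm (Q : Tab) (i l : ℕ) :
    (place Q i l).flatten.Perm (l :: Q.flatten) := by
  unfold place
  split
  · rename_i h
    have hQ : Q = Q.take i ++ Q[i] :: Q.drop (i+1) := by
      conv_lhs => rw [← List.take_append_drop i Q]
      congr 1
      exact List.drop_eq_getElem_cons h
    have hset : Q.set i (Q.getD i [] ++ [l]) = Q.take i ++ (Q[i] ++ [l]) :: Q.drop (i+1) := by
      rw [List.set_eq_take_append_cons_drop, if_pos h, List.getD_eq_getElem _ _ h]
    rw [← Multiset.coe_eq_coe, hset]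
    conv_rhs => rw [hQ]
    simp only [List.flatten_append, List.flatten_cons, coe_append_ms, ← Multiset.cons_coe,
      Multiset.add_cons, Multiset.cons_add]
    simp only [Multiset.coe_nil, add_zero]
  · rw [← Multiset.coe_eq_coe]
    simp only [List.flatten_append, List.flatten_cons, coe_append_ms, ← Multiset.cons_coe,
      Multiset.add_cons, Multiset.cons_add]
    simp only [Multiset.coe_nil, add_zero, List.flatten_nil]

lemma place_ne_nil {Q : Tab} (hQ : ∀ row ∈ Q, row ≠ []) (i l : ℕ) :
    ∀ row ∈ place Q i l, row ≠ [] := by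
  unfold place
  split
  · intro row hrow
    rcases List.mem_or_eq_of_mem_set hrow with h | h
    · exact hQ row h
    · subst h; simp
  · intro row hrow
    rcases List.mem_append.mp hrow with h | h
    · exact hQ row h
    · simp at h; subst h; simp

/-- Invariant of the RS fold state. -/
structure Inv (word : List (ℕ × ℕ)) (PQ : Tab × Tab) : Prop where
  rows : Rows PQ.1
  permP : PQ.1.flatten.Perm (word.map Prod.fst)
  sh : shape PQ.1 = shape PQ.2
  permQ : PQ.2.flatten.Perm (word.map Prod.snd)
  ne : ∀ row ∈ PQ.2, row ≠ []

lemma inv_step {word : List (ℕ × ℕ)} {PQ : Tab × Tab} (hinv : Inv word PQ) (x l : ℕ)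
    (hx : x ∉ word.map Prod.fst) (hnd : (word.map Prod.fst).Nodup) :
    Inv (word ++ [(x, l)]) (RSstep PQ (x, l)) := by
  obtain ⟨P, Q⟩ := PQ
  obtain ⟨hrows, hpermP, hsh, hpermQ, hne⟩ := hinv
  have hndP : P.flatten.Nodup := hpermP.nodup_iff.mpr hnd
  have hxP : x ∉ P.flatten := fun hc => hx (hpermP.mem_iff.mp hc)
  obtain ⟨i₀, hi₀, hs⟩ := shape_rowInsert x P
  have hfi := RSstep_findIdx x P hi₀ hs
  have hQlen : Q.length = P.length := by
    rw [← length_shape P, ← length_shape Q, hsh]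
  constructor
  · exact rows_rowInsert hrows hndP hxP
  · show (rowInsert x P).flatten.Perm _
    refine (rowInsert_perm x P).trans ?_
    rw [← Multiset.coe_eq_coe]
    simp only [List.map_append, coe_append_ms, ← Multiset.cons_coe, Multiset.add_cons,
      Multiset.cons_add]
    rw [Multiset.coe_eq_coe.mpr hpermP, add_comm]
    rfl
  · show shape (rowInsert x P) = shape (place Q _ l)
    rw [hfi, shape_place Q i₀ l (by omega), hs, hsh]
  · show (place Q _ l).flatten.Perm _
    rw [hfi]
    refine (place_flatten_perm Q i₀ l).trans ?_
    rw [← Multiset.coe_eq_coe]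
    simp only [List.map_append, coe_append_ms, ← Multiset.cons_coe, Multiset.add_cons,
      Multiset.cons_add]
    rw [Multiset.coe_eq_coe.mpr hpermQ, add_comm]
    rfl
  · show ∀ row ∈ place Q _ l, row ≠ []
    exact place_ne_nil hne _ l

lemma RSword_append_single (word : List (ℕ × ℕ)) (p : ℕ × ℕ) :
    RSword (word ++ [p]) = RSstep (RSword word) p := by
  unfold RSword
  rw [List.foldl_append]
  rfl

lemma inv_RSword (word : List (ℕ × ℕ)) (hnd : (word.map Prod.fst).Nodup) :
    Inv word (RSword word) := by
  induction word using List.reverseRecOn with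
  | nil =>
    constructor <;> simp [RSword, shape, Rows]
  | append_singleton ys p ih =>
    obtain ⟨x, l⟩ := p
    rw [RSword_append_single]
    have hnd' : (ys.map Prod.fst).Nodup := by
      simp only [List.map_append, List.nodup_append] at hnd
      exact hnd.1
    have hx : x ∉ ys.map Prod.fst := by
      simp only [List.map_append, List.nodup_append] at hnd
      intro hc
      exact hnd.2.2 _ hc _ (by simp) rfl
    exact inv_step (ih hnd') x l hx hnd'

end RSproof
namespace RSproof
open List

lemma bump_pos_not_lt {row1 row2 : List ℕ} {x1 x2 : ℕ}
    (hc1 : List.Chain' (· < ·) row1)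
    (hx2 : x2 ∉ row2)
    (hb1 : bIdx x1 row1 < row1.length) (hb2 : bIdx x2 row2 < row2.length)
    (hlen : row1.length = row2.length)
    (hy : row1[bIdx x1 row1] = row2[bIdx x2 row2])
    (hhead : row1.set (bIdx x1 row1) x1 = row2.set (bIdx x2 row2) x2) :
    ¬ (bIdx x1 row1 < bIdx x2 row2) := by
  intro hlt
  set p1 := bIdx x1 row1
  set p2 := bIdx x2 row2
  have h1 : (row1.set p1 x1)[p2]'(by simpa using by omega) = row1[p2]'(by omega) := by
    rw [List.getElem_set, if_neg (by omega)]
  have h2 : (row2.set p2 x2)[p2]'(by simpa using hb2) = x2 := by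
    rw [List.getElem_set, if_pos rfl]
  have h3 : (row1.set p1 x1)[p2]'(by simpa using by omega)
      = (row2.set p2 x2)[p2]'(by simpa using hb2) := by
    congr 1
  have h4 : row1[p1] < row1[p2]'(by omega) := sorted_getElem hc1 hb1 (by omega) hlt
  have h5 : x2 < row2[p2] := lt_of_bIdx hb2
  rw [h1, h2] at h3
  have : row2[p2] < row2[p2] := by
    calc row2[p2] = row1[p1] := hy.symm
      _ < row1[p2]'(by omega) := h4
      _ = x2 := h3
      _ < row2[p2] := h5
  exact lt_irrefl _ this

lemma rowInsert_inj {P1 : Tab} : ∀ {P2 : Tab} {x1 x2 : ℕ},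
    Rows P1 → Rows P2 →
    P1.flatten.Nodup → P2.flatten.Nodup →
    x1 ∉ P1.flatten → x2 ∉ P2.flatten →
    shape P1 = shape P2 → rowInsert x1 P1 = rowInsert x2 P2 →
    x1 = x2 ∧ P1 = P2 := by
  induction P1 with
  | nil =>
    intro P2 x1 x2 _ _ _ _ _ _ hsh heq
    have hP2 : P2 = [] := by simpa [shape] using hsh.symm
    subst hP2
    simp [rowInsert] at heq
    simp [heq]
  | cons row1 rest1 ih =>
    intro P2 x1 x2 hr1 hr2 hnd1 hnd2 hx1 hx2 hsh heq
    cases P2 with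
    | nil => simp [shape] at hsh
    | cons row2 rest2 =>
      simp only [shape, List.map_cons, List.cons.injEq] at hsh
      obtain ⟨hlen, hshrest⟩ := hsh
      rw [rowInsert, rowInsert] at heq
      simp only [List.get_eq_getElem] at heq
      split_ifs at heq with hb1 hb2 hb2
      · -- both bump
        rw [List.cons.injEq] at heq
        obtain ⟨hhead, htail⟩ := heq
        have hnd1' : rest1.flatten.Nodup := by
          simp only [List.flatten_cons, List.nodup_append] at hnd1; exact hnd1.2.1
        have hnd2' : rest2.flatten.Nodup := by
          simp only [List.flatten_cons, List.nodup_append] at hnd2; exact hnd2.2.1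
        have hy1 : row1[bIdx x1 row1] ∉ rest1.flatten := by
          intro hc
          simp only [List.flatten_cons, List.nodup_append] at hnd1
          exact hnd1.2.2 _ (List.getElem_mem _) _ hc rfl
        have hy2 : row2[bIdx x2 row2] ∉ rest2.flatten := by
          intro hc
          simp only [List.flatten_cons, List.nodup_append] at hnd2
          exact hnd2.2.2 _ (List.getElem_mem _) _ hc rfl
        obtain ⟨hyeq, hrest⟩ := ih (fun r hr => hr1 r (by simp [hr]))
          (fun r hr => hr2 r (by simp [hr])) hnd1' hnd2' hy1 hy2 hshrest htail
        have hx1r : x1 ∉ row1 := fun hc => hx1 (by simp [hc])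
        have hx2r : x2 ∉ row2 := fun hc => hx2 (by simp [hc])
        have hpeq : bIdx x1 row1 = bIdx x2 row2 := by
          rcases lt_trichotomy (bIdx x1 row1) (bIdx x2 row2) with h | h | h
          · exact absurd h (bump_pos_not_lt (hr1 row1 (by simp)) hx2r hb1 hb2 hlen hyeq hhead)
          · exact h
          · exact absurd h (bump_pos_not_lt (hr2 row2 (by simp)) hx1r hb2 hb1 hlen.symm
              hyeq.symm hhead.symm)
        have hxeq : x1 = x2 := by
          have e1 : (row1.set (bIdx x1 row1) x1)[bIdx x1 row1]'(by simpa using hb1) = x1 := by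
            rw [List.getElem_set, if_pos rfl]
          have e2 : (row2.set (bIdx x2 row2) x2)[bIdx x1 row1]'(by
              rw [List.length_set, ← hlen]; exact hb1) = x2 := by
            rw [List.getElem_set, if_pos hpeq.symm]
          rw [← e1, ← e2]
          congr 1
        have hroweq : row1 = row2 := by
          have e1 : (row1.set (bIdx x1 row1) x1).set (bIdx x1 row1) (row1[bIdx x1 row1]) = row1 := by
            rw [List.set_set]
            exact set_self _ _ hb1

          have e2 : (row2.set (bIdx x2 row2) x2).set (bIdx x2 row2) (row2[bIdx x2 row2]) = row2 := by
            rw [List.set_set]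
            exact set_self _ _ hb2
          rw [← e1, ← e2, hhead, hyeq, hpeq]
        exact ⟨hxeq, by rw [hroweq, hrest]⟩
      · -- bump / no-bump : impossible by lengths
        exfalso
        rw [List.cons.injEq] at heq
        have := congrArg List.length heq.1
        simp at this
        omega
      · exfalso
        rw [List.cons.injEq] at heq
        have := congrArg List.length heq.1
        simp at this
        omega
      · rw [List.cons.injEq] at heq
        obtain ⟨hhead, htail⟩ := heq
        obtain ⟨hroweq, hxeq⟩ := List.append_inj' hhead (by simp)
        simp at hxeq
        exact ⟨hxeq, by rw [hroweq, htail]⟩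

lemma place_mixed_false {Q1 Q2 : Tab} {i1 i2 l : ℕ}
    (hne1 : ∀ row ∈ Q1, row ≠ []) (hl2 : l ∉ Q2.flatten)
    (h1 : i1 < Q1.length) (h2 : ¬ i2 < Q2.length)
    (heq : Q1.set i1 (Q1.getD i1 [] ++ [l]) = Q2 ++ [[l]]) : False := by
  have hlen : Q1.length = Q2.length + 1 := by
    have := congrArg List.length heq
    simpa using this
  rcases Nat.lt_or_ge i1 Q2.length with hi | hi
  · have e1 : (Q1.set i1 (Q1.getD i1 [] ++ [l]))[i1]'(by simpa using h1)
        = Q1.getD i1 [] ++ [l] := by rw [List.getElem_set, if_pos rfl]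
    have e2 : (Q2 ++ [[l]])[i1]'(by simp; omega) = Q2[i1] := List.getElem_append_left hi
    have e3 : Q1.getD i1 [] ++ [l] = Q2[i1] := by rw [← e1, ← e2]; congr 1
    have : l ∈ Q2.flatten := List.mem_flatten.mpr ⟨Q2[i1], List.getElem_mem _, by rw [← e3]; simp⟩
    exact hl2 this
  · have hi1 : i1 = Q2.length := by omega
    have e1 : (Q1.set i1 (Q1.getD i1 [] ++ [l]))[i1]'(by simpa using h1)
        = Q1.getD i1 [] ++ [l] := by rw [List.getElem_set, if_pos rfl]
    have e2 : (Q2 ++ [[l]])[i1]'(by simp; omega) = [l] := by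
      subst hi1
      simp
    have e3 : Q1.getD i1 [] ++ [l] = [l] := by
      have h := List.getElem_of_eq heq (i := i1) (by simpa using h1)
      rw [e1, e2] at h
      exact h
    have : Q1.getD i1 [] = [] := by
      have := congrArg List.length e3
      simpa using this
    have hmem : Q1.getD i1 [] ∈ Q1 := by
      rw [List.getD_eq_getElem _ _ h1]
      exact List.getElem_mem _
    exact hne1 _ hmem this

lemma place_inj {Q1 Q2 : Tab} {i1 i2 l : ℕ}
    (hne1 : ∀ row ∈ Q1, row ≠ []) (hne2 : ∀ row ∈ Q2, row ≠ [])
    (hl1 : l ∉ Q1.flatten) (hl2 : l ∉ Q2.flatten)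
    (heq : place Q1 i1 l = place Q2 i2 l) : Q1 = Q2 := by
  unfold place at heq
  split_ifs at heq with h1 h2 h2
  · -- both set
    have hlen : Q1.length = Q2.length := by
      have := congrArg List.length heq
      simpa using this
    by_cases hii : i1 = i2
    · subst hii
      apply List.ext_getElem (by omega)
      intro j hj hj2
      have this := List.getElem_of_eq heq (i := j) (by simpa using hj)
      simp only [List.getElem_set] at this
      by_cases hji : i1 = j
      · subst hji
        rw [if_pos rfl, if_pos rfl] at this
        have : Q1.getD i1 [] = Q2.getD i1 [] := by
          have := List.append_inj' this (by simp)
          exact this.1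
        rw [List.getD_eq_getElem _ _ hj, List.getD_eq_getElem _ _ hj2] at this
        exact this
      · rwa [if_neg hji, if_neg hji] at this
    · exfalso
      have e1 : (Q1.set i1 (Q1.getD i1 [] ++ [l]))[i1]'(by simpa using h1)
          = Q1.getD i1 [] ++ [l] := by rw [List.getElem_set, if_pos rfl]
      have e2 : (Q2.set i2 (Q2.getD i2 [] ++ [l]))[i1]'(by simp; omega)
          = Q2[i1]'(by omega) := by rw [List.getElem_set, if_neg (fun hc => hii hc.symm)]
      have e3 : Q1.getD i1 [] ++ [l] = Q2[i1]'(by omega) := by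
        rw [← e1, ← e2]; congr 1
      exact hl2 (List.mem_flatten.mpr ⟨Q2[i1]'(by omega), List.getElem_mem _, by
        rw [← e3]; simp⟩)
  · exact absurd heq (fun h => place_mixed_false hne1 hl2 h1 h2 h)
  · exact absurd heq.symm (fun h => place_mixed_false hne2 hl1 h2 h1 h)
  · exact List.append_cancel_right heq

end RSproof
namespace RSproof
open List

lemma RSstep_fst (PQ : Tab × Tab) (xl : ℕ × ℕ) : (RSstep PQ xl).1 = rowInsert xl.1 PQ.1 := rfl

lemma RSword_injective : ∀ {w1 w2 : List (ℕ × ℕ)},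
    w1.map Prod.snd = w2.map Prod.snd →
    (w1.map Prod.fst).Nodup → (w2.map Prod.fst).Nodup → (w1.map Prod.snd).Nodup →
    RSword w1 = RSword w2 → w1 = w2 := by
  intro w1
  induction w1 using List.reverseRecOn with
  | nil =>
    intro w2 hsnd _ _ _ _
    have : w2.map Prod.snd = [] := hsnd.symm
    simpa using (List.map_eq_nil_iff.mp this).symm
  | append_singleton ys p ih =>
    obtain ⟨x1, l⟩ := p
    intro w2 hsnd hnd1 hnd2 hnds heq
    rcases List.eq_nil_or_concat w2 with rfl | ⟨zs, q, rfl⟩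
    · simp at hsnd
    obtain ⟨x2, l2⟩ := q
    rw [List.concat_eq_append] at hnd2 heq hsnd
    simp only [List.map_append, List.map_cons, List.map_nil] at hsnd
    obtain ⟨hsnd', hl2⟩ := List.append_inj' hsnd (by simp)
    simp only [List.cons.injEq, and_true] at hl2
    subst hl2
    rw [RSword_append_single, RSword_append_single] at heq
    have hndys : (ys.map Prod.fst).Nodup := by
      simp only [List.map_append, List.nodup_append] at hnd1; exact hnd1.1
    have hndzs : (zs.map Prod.fst).Nodup := by
      simp only [List.map_append, List.nodup_append] at hnd2; exact hnd2.1
    have I1 := inv_RSword ys hndys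
    have I2 := inv_RSword zs hndzs
    have hl1 : l ∉ (RSword ys).2.flatten := by
      intro hc
      have hmem : l ∈ ys.map Prod.snd := I1.permQ.mem_iff.mp hc
      simp only [List.map_append, List.nodup_append] at hnds
      exact hnds.2.2 _ hmem _ (by simp) rfl
    have hl2' : l ∉ (RSword zs).2.flatten := by
      intro hc
      have hmem : l ∈ zs.map Prod.snd := I2.permQ.mem_iff.mp hc
      rw [← hsnd'] at hmem
      simp only [List.map_append, List.nodup_append] at hnds
      exact hnds.2.2 _ hmem _ (by simp) rfl
    have hQ : (RSword ys).2 = (RSword zs).2 :=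
      place_inj I1.ne I2.ne hl1 hl2' (congrArg Prod.snd heq)
    have hP := congrArg Prod.fst heq
    rw [RSstep_fst, RSstep_fst] at hP
    have hx1 : x1 ∉ (RSword ys).1.flatten := by
      intro hc
      have hmem : x1 ∈ ys.map Prod.fst := I1.permP.mem_iff.mp hc
      simp only [List.map_append, List.nodup_append] at hnd1
      exact hnd1.2.2 _ hmem _ (by simp) rfl
    have hx2 : x2 ∉ (RSword zs).1.flatten := by
      intro hc
      have hmem : x2 ∈ zs.map Prod.fst := I2.permP.mem_iff.mp hc
      simp only [List.map_append, List.nodup_append] at hnd2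
      exact hnd2.2.2 _ hmem _ (by simp) rfl
    obtain ⟨hx, hPP⟩ := rowInsert_inj I1.rows I2.rows
      (I1.permP.nodup_iff.mpr hndys) (I2.permP.nodup_iff.mpr hndzs)
      hx1 hx2 (I1.sh.trans (hQ ▸ I2.sh.symm)) hP
    have hys : ys = zs := by
      apply ih hsnd' hndys hndzs
      · simp only [List.map_append, List.nodup_append] at hnds; exact hnds.1
      · exact Prod.ext hPP hQ
    rw [hys, hx, List.concat_eq_append]

end RSproof
namespace RSproof

/-- `σ` as a monoid hom. -/
def sigmaHom (r n : ℕ) : GW r n →* Equiv.Perm (Fin n) where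
  toFun := GW.σ
  map_one' := rfl
  map_mul' := fun _ _ => rfl

end RSproof

/-- Let `w ∈ W_n` be ascending with `RS w = (P, Q)`.  For each `k` let `u k` be the
permutation matrix of `W_n` fixing every position outside the label set `n_k` and
whose classical Robinson–Schensted image on `n_k` is `(P_k, Q_k)`, and let
`⟨w.a, 1⟩` denote the diagonal part `u_r` of `w`.  Then
`w = u_0 ⬝ u_1 ⋯ u_{r-1} ⬝ u_r`, and consequently
`sgn_i w = sgn(u_0) ⋯ sgn(u_{r-1}) ⬝ (ζ^i)^{a_1 + ⋯ + a_n}` for each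
`0 ≤ i ≤ r - 1`. -/
theorem ascending_factorization (r n : ℕ) (hr : 1 ≤ r) (hn : 1 ≤ n)
    (w : GW r n) (hw : AscendingElem w) (u : Fin r → GW r n)
    (hperm : ∀ k : Fin r, (u k).a = fun _ => 0)
    (hfix : ∀ k : Fin r, ∀ i : Fin n, i ∉ labelIdx w (k : ℕ) → (u k).σ i = i)
    (hRS : ∀ k : Fin r,
      RSword ((labelIdx w (k : ℕ)).map fun i => (((u k).σ i : ℕ) + 1, (i : ℕ) + 1)) =
        (Ptab w k, Qtab w k)) :
    w = ((List.finRange r).map u).prod * GW.mk w.a 1 ∧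
      ∀ i : ℕ, i ≤ r - 1 →
        sgnRep r n i w =
          (∏ k : Fin r, ((Equiv.Perm.sign (u k).σ : ℤ) : ℂ)) *
            (zeta r ^ i) ^ (∑ j, (w.a j).val) := by
  haveI : NeZero r := ⟨by omega⟩
  classical
  have hmemIdx : ∀ (k : ℕ) (j : Fin n), j ∈ labelIdx w k ↔ (w.a j).val = k := by
    intro k j
    simp [labelIdx, List.mem_filter, List.mem_finRange]
  have hndIdx : ∀ k : ℕ, (labelIdx w k).Nodup :=
    fun k => (List.nodup_finRange n).filter _
  -- words coincide
  have hword : ∀ k : Fin r, ∀ i ∈ labelIdx w (k : ℕ), (u k).σ i = w.σ i := by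
    intro k i hi
    have hinj : ((labelIdx w (k : ℕ)).map fun i => (((u k).σ i : ℕ) + 1, (i : ℕ) + 1)) =
        wordPairs w (k : ℕ) := by
      apply RSproof.RSword_injective
      · simp [wordPairs, List.map_map, Function.comp_def]
      · rw [List.map_map]
        refine List.Nodup.map ?_ (hndIdx k)
        intro a b hab
        simp only [Function.comp_apply] at hab
        exact (u k).σ.injective (Fin.val_injective (by omega))
      · unfold wordPairs
        rw [List.map_map]
        refine List.Nodup.map ?_ (hndIdx k)
        intro a b hab
        simp only [Function.comp_apply] at hab
        exact w.σ.injective (Fin.val_injective (by omega))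
      · rw [List.map_map]
        refine List.Nodup.map ?_ (hndIdx k)
        intro a b hab
        simp only [Function.comp_apply] at hab
        exact Fin.val_injective (by omega)
      · exact (hRS k).trans rfl
    have := List.map_inj_left.mp hinj i hi
    simp only [wordPairs, Prod.mk.injEq] at this
    exact Fin.val_injective (by omega)
  have hmem : ∀ j : Fin n, j ∈ labelIdx w ((w.a j).val) :=
    fun j => (hmemIdx _ j).mpr rfl
  have hstab : ∀ k : Fin r, ∀ j ∈ labelIdx w (k : ℕ), (u k).σ j ∈ labelIdx w (k : ℕ) := by
    intro k j hj
    by_contra hc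
    have h2 : (u k).σ ((u k).σ j) = (u k).σ j := hfix k _ hc
    have h3 : (u k).σ j = j := (u k).σ.injective h2
    rw [h3] at hc
    exact hc hj
  have prod_a : ∀ L : List (Fin r), (((L.map u).prod).a) = fun _ => 0 := by
    intro L
    induction L with
    | nil => rfl
    | cons k L ih =>
      funext j
      simp only [List.map_cons, List.prod_cons, GW.mul_a, ih, hperm]
      simp
  have prod_sigma : ∀ L : List (Fin r), L.Nodup → ∀ j : Fin n,
      (((L.map u).prod).σ) j =
        if (⟨(w.a j).val, ZMod.val_lt _⟩ : Fin r) ∈ L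
        then (u ⟨(w.a j).val, ZMod.val_lt _⟩).σ j else j := by
    intro L
    induction L with
    | nil => simp
    | cons k L ih =>
      intro hnd j
      have hndL : L.Nodup := (List.nodup_cons.mp hnd).2
      have hkL : k ∉ L := (List.nodup_cons.mp hnd).1
      simp only [List.map_cons, List.prod_cons, GW.mul_sigma, Equiv.Perm.mul_apply]
      set k₀ : Fin r := ⟨(w.a j).val, ZMod.val_lt _⟩ with hk₀
      by_cases hin : k₀ ∈ L
      · rw [ih hndL j, if_pos hin]
        have hne : k ≠ k₀ := fun hc => hkL (hc ▸ hin)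
        have hj' : (u k₀).σ j ∈ labelIdx w (k₀ : ℕ) := hstab k₀ j (hmem j)
        have hnotk : (u k₀).σ j ∉ labelIdx w (k : ℕ) := by
          intro hc
          have h1 := (hmemIdx _ _).mp hc
          have h2 := (hmemIdx _ _).mp hj'
          exact hne (Fin.val_injective (by omega))
        rw [hfix k _ hnotk, if_pos (List.mem_cons_of_mem _ hin)]
      · rw [ih hndL j, if_neg hin]
        by_cases hk : k = k₀
        · subst hk
          rw [if_pos List.mem_cons_self]
        · have hnotk : j ∉ labelIdx w (k : ℕ) := by
            intro hc
            have h1 := (hmemIdx _ _).mp hc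
            exact hk (Fin.val_injective (by rw [hk₀]; exact h1.symm))
          rw [hfix k _ hnotk, if_neg (by
            intro hc
            rcases List.mem_cons.mp hc with hc | hc
            · exact hk hc.symm
            · exact hin hc)]
  have hσ : (((List.finRange r).map u).prod).σ = w.σ := by
    apply Equiv.ext
    intro j
    rw [prod_sigma _ (List.nodup_finRange r) j, if_pos (List.mem_finRange _)]
    exact hword _ j (hmem j)
  have hfact : w = ((List.finRange r).map u).prod * GW.mk w.a 1 := by
    apply GW.ext
    · funext j
      rw [GW.mul_a]
      show w.a j = (((List.finRange r).map u).prod).a _ + w.a j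
      rw [prod_a]
      simp
    · rw [GW.mul_sigma, mul_one, hσ]
  refine ⟨hfact, ?_⟩
  intro i hi
  have hsign : Equiv.Perm.sign w.σ = ∏ k : Fin r, Equiv.Perm.sign (u k).σ := by
    rw [← hσ]
    have h1 : (((List.finRange r).map u).prod).σ =
        ((List.finRange r).map (fun k => (u k).σ)).prod := by
      have := MonoidHom.map_list_prod (RSproof.sigmaHom r n) ((List.finRange r).map u)
      simpa [List.map_map, Function.comp_def, RSproof.sigmaHom] using this
    rw [h1, Equiv.Perm.sign.map_list_prod, List.map_map]
    rw [Fin.prod_univ_def]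
    rfl
  unfold sgnRep
  rw [← pow_mul, hsign]
  have hcast : (((∏ k : Fin r, Equiv.Perm.sign (u k).σ : ℤˣ) : ℤ) : ℂ) =
      ∏ k : Fin r, ((Equiv.Perm.sign (u k).σ : ℤ) : ℂ) := by
    push_cast
    rfl
  rw [hcast, mul_comm]
end
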